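/- arXiv:1310.5240 — 4 statements merged into one kernel-verified Lean document; each statement's English description precedes it below -/
import Mathlib

section
/- If there exists a CMDRR(n,k), a SAMDRR(m), and two mutually orthogonal latin squares of order n, then there exists a CMDRR(mn, mk). -/
open scoped Classical

/-- A mixed doubles game: an unordered pair of teams, each team being a
(man, woman) pair, for `n` men and `n` women indexed by `Fin n`. -/
abbrev Game (n : ℕ) := Sym2 (Fin n × Fin n)

/-- A game is valid if its two teams have distinct men and distinct women. -/
def Game.valid {n : ℕ} (g : Game n) : Prop :=
  ∃ a b : Fin n × Fin n, g = s(a, b) ∧ a.1 ≠ b.1 ∧ a.2 ≠ b.2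

/-- Man `m` plays in game `g`. -/
def Game.manIn {n : ℕ} (m : Fin n) (g : Game n) : Prop :=
  ∃ a b : Fin n × Fin n, g = s(a, b) ∧ a.1 = m

/-- Woman `w` plays in game `g`. -/
def Game.womanIn {n : ℕ} (w : Fin n) (g : Game n) : Prop :=
  ∃ a b : Fin n × Fin n, g = s(a, b) ∧ a.2 = w

/-- Man `m` and woman `w` are partners (teammates) in game `g`. -/
def Game.partners {n : ℕ} (m w : Fin n) (g : Game n) : Prop :=
  (m, w) ∈ g

/-- Man `m` and woman `w` are opponents in game `g` (on different teams). -/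
def Game.opposesMW {n : ℕ} (m w : Fin n) (g : Game n) : Prop :=
  ∃ a b : Fin n × Fin n, g = s(a, b) ∧ a.1 = m ∧ b.2 = w

/-- Men `m` and `m'` are opponents in game `g`. -/
def Game.opposesMM {n : ℕ} (m m' : Fin n) (g : Game n) : Prop :=
  ∃ a b : Fin n × Fin n, g = s(a, b) ∧ a.1 = m ∧ b.1 = m'

/-- Women `w` and `w'` are opponents in game `g`. -/
def Game.opposesWW {n : ℕ} (w w' : Fin n) (g : Game n) : Prop :=
  ∃ a b : Fin n × Fin n, g = s(a, b) ∧ a.2 = w ∧ b.2 = w'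

/-- A complete mixed doubles round robin tournament CMDRR(n,k). -/
structure CMDRR (n k : ℕ) where
  /-- The spouse pairs (man, woman). -/
  spouses : Finset (Fin n × Fin n)
  spouses_card : spouses.card = k
  spouses_inj1 : ∀ p ∈ spouses, ∀ q ∈ spouses, p.1 = q.1 → p = q
  spouses_inj2 : ∀ p ∈ spouses, ∀ q ∈ spouses, p.2 = q.2 → p = q
  /-- The multiset of games. -/
  games : Multiset (Game n)
  valid : ∀ g ∈ games, g.valid
  /-- (i) no game contains both members of a spouse pair. -/
  no_spouse_game : ∀ g ∈ games, ∀ p ∈ spouses, ¬ (Game.manIn p.1 g ∧ Game.womanIn p.2 g)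
  /-- (ii) every non-spouse man-woman pair partners exactly once ... -/
  partners_once : ∀ m w : Fin n, (m, w) ∉ spouses →
    games.countP (Game.partners m w) = 1
  /-- ... and opposes exactly once. -/
  opposesMW_once : ∀ m w : Fin n, (m, w) ∉ spouses →
    games.countP (Game.opposesMW m w) = 1
  /-- (iii) a spoused man opposes every other man exactly once. -/
  spousedM_opposes : ∀ m ∈ spouses.image Prod.fst, ∀ m' : Fin n, m' ≠ m →
    games.countP (Game.opposesMM m m') = 1
  /-- (iii) a spoused woman opposes every other woman exactly once. -/
  spousedW_opposes : ∀ w ∈ spouses.image Prod.snd, ∀ w' : Fin n, w' ≠ w →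
    games.countP (Game.opposesWW w w') = 1
  /-- (iv) an unspoused man opposes exactly one other unspoused man exactly twice,
  and all other men exactly once. -/
  unspousedM_opposes : ∀ m : Fin n, m ∉ spouses.image Prod.fst →
    ∃ m' : Fin n, m' ≠ m ∧ m' ∉ spouses.image Prod.fst ∧
      games.countP (Game.opposesMM m m') = 2 ∧
      ∀ m'' : Fin n, m'' ≠ m → m'' ≠ m' → games.countP (Game.opposesMM m m'') = 1
  /-- (iv) likewise for unspoused women. -/
  unspousedW_opposes : ∀ w : Fin n, w ∉ spouses.image Prod.snd →
    ∃ w' : Fin n, w' ≠ w ∧ w' ∉ spouses.image Prod.snd ∧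
      games.countP (Game.opposesWW w w') = 2 ∧
      ∀ w'' : Fin n, w'' ≠ w → w'' ≠ w' → games.countP (Game.opposesWW w w'') = 1

/-- A round: a multiset of games in which each player appears at most once. -/
def IsRound {n : ℕ} (r : Multiset (Game n)) : Prop :=
  (∀ m : Fin n, r.countP (Game.manIn m) ≤ 1) ∧
  (∀ w : Fin n, r.countP (Game.womanIn w) ≤ 1)

/-- A full round: all players play if `n` is even; all but exactly one man and
one woman play if `n` is odd. -/
def FullRound {n : ℕ} (r : Multiset (Game n)) : Prop :=
  IsRound r ∧
  ((Even n ∧ (∀ m : Fin n, r.countP (Game.manIn m) = 1) ∧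
      (∀ w : Fin n, r.countP (Game.womanIn w) = 1)) ∨
   (¬ Even n ∧ (∃! m : Fin n, r.countP (Game.manIn m) = 0) ∧
      (∃! w : Fin n, r.countP (Game.womanIn w) = 0)))

/-- A latin square of order `n`. -/
def IsLatinSquare {n : ℕ} (L : Fin n × Fin n → Fin n) : Prop :=
  (∀ i : Fin n, Function.Bijective (fun j : Fin n => L (i, j))) ∧
  (∀ j : Fin n, Function.Bijective (fun i : Fin n => L (i, j)))

/-- Two mutually orthogonal latin squares of order `n`. -/
def MOLS {n : ℕ} (L₁ L₂ : Fin n × Fin n → Fin n) : Prop :=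
  IsLatinSquare L₁ ∧ IsLatinSquare L₂ ∧
  Function.Bijective (fun p : Fin n × Fin n => (L₁ p, L₂ p))

namespace CMDRRAux

variable {N : ℕ}

lemma valid_mk {u v : Fin N × Fin N} :
    Game.valid (s(u, v) : Game N) ↔ u.1 ≠ v.1 ∧ u.2 ≠ v.2 := by
  constructor
  · rintro ⟨p, q, h, h1, h2⟩
    rw [Sym2.eq_iff] at h
    rcases h with ⟨rfl, rfl⟩ | ⟨rfl, rfl⟩ <;> exact ⟨by tauto, by tauto⟩
  · rintro ⟨h1, h2⟩; exact ⟨u, v, rfl, h1, h2⟩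

lemma manIn_mk {u v : Fin N × Fin N} {a : Fin N} :
    Game.manIn a s(u, v) ↔ u.1 = a ∨ v.1 = a := by
  constructor
  · rintro ⟨p, q, h, h1⟩
    rw [Sym2.eq_iff] at h
    rcases h with ⟨rfl, rfl⟩ | ⟨rfl, rfl⟩ <;> tauto
  · rintro (h | h)
    exacts [⟨u, v, rfl, h⟩, ⟨v, u, Sym2.eq_swap.symm, h⟩]

lemma womanIn_mk {u v : Fin N × Fin N} {a : Fin N} :
    Game.womanIn a s(u, v) ↔ u.2 = a ∨ v.2 = a := by
  constructor
  · rintro ⟨p, q, h, h1⟩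
    rw [Sym2.eq_iff] at h
    rcases h with ⟨rfl, rfl⟩ | ⟨rfl, rfl⟩ <;> tauto
  · rintro (h | h)
    exacts [⟨u, v, rfl, h⟩, ⟨v, u, Sym2.eq_swap.symm, h⟩]

lemma partners_mk {u v : Fin N × Fin N} {a b : Fin N} :
    Game.partners a b s(u, v) ↔ (a, b) = u ∨ (a, b) = v := by
  unfold Game.partners; exact Sym2.mem_iff

lemma opposesMW_mk {u v : Fin N × Fin N} {a b : Fin N} :
    Game.opposesMW a b s(u, v) ↔ (u.1 = a ∧ v.2 = b) ∨ (v.1 = a ∧ u.2 = b) := by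
  constructor
  · rintro ⟨p, q, h, h1, h2⟩
    rw [Sym2.eq_iff] at h
    rcases h with ⟨rfl, rfl⟩ | ⟨rfl, rfl⟩ <;> tauto
  · rintro (⟨h1, h2⟩ | ⟨h1, h2⟩)
    exacts [⟨u, v, rfl, h1, h2⟩, ⟨v, u, Sym2.eq_swap.symm, h1, h2⟩]

lemma opposesMM_mk {u v : Fin N × Fin N} {a b : Fin N} :
    Game.opposesMM a b s(u, v) ↔ (u.1 = a ∧ v.1 = b) ∨ (v.1 = a ∧ u.1 = b) := by
  constructor
  · rintro ⟨p, q, h, h1, h2⟩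
    rw [Sym2.eq_iff] at h
    rcases h with ⟨rfl, rfl⟩ | ⟨rfl, rfl⟩ <;> tauto
  · rintro (⟨h1, h2⟩ | ⟨h1, h2⟩)
    exacts [⟨u, v, rfl, h1, h2⟩, ⟨v, u, Sym2.eq_swap.symm, h1, h2⟩]

lemma opposesWW_mk {u v : Fin N × Fin N} {a b : Fin N} :
    Game.opposesWW a b s(u, v) ↔ (u.2 = a ∧ v.2 = b) ∨ (v.2 = a ∧ u.2 = b) := by
  constructor
  · rintro ⟨p, q, h, h1, h2⟩
    rw [Sym2.eq_iff] at h
    rcases h with ⟨rfl, rfl⟩ | ⟨rfl, rfl⟩ <;> tauto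
  · rintro (⟨h1, h2⟩ | ⟨h1, h2⟩)
    exacts [⟨u, v, rfl, h1, h2⟩, ⟨v, u, Sym2.eq_swap.symm, h1, h2⟩]

-- counting helpers

lemma countP_iff_congr {α : Type*} {p q : α → Prop} [DecidablePred p] [DecidablePred q]
    (s : Multiset α) (h : ∀ x ∈ s, p x ↔ q x) : s.countP p = s.countP q :=
  Multiset.countP_congr rfl (fun x hx => propext (h x hx))

lemma countP_map' {α β : Type*} (f : α → β) (s : Multiset α) (p : β → Prop)
    [DecidablePred p] : (s.map f).countP p = s.countP (fun a => p (f a)) := by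
  rw [Multiset.countP_map, Multiset.countP_eq_card_filter]

lemma countP_bind {α β : Type*} (s : Multiset α) (f : α → Multiset β) (p : β → Prop)
    [DecidablePred p] :
    (s.bind f).countP p = (s.map fun a => (f a).countP p).sum := by
  induction s using Multiset.induction with
  | empty => simp
  | cons a s ih => simp [Multiset.countP_add, ih]

lemma countP_eq_sum_indicator {α : Type*} (s : Multiset α) (p : α → Prop)
    [DecidablePred p] :
    s.countP p = (s.map fun a => if p a then 1 else 0).sum := by
  induction s using Multiset.induction with
  | empty => simp
  | cons a s ih => by_cases h : p a <;> simp [Multiset.countP_cons, h, ih, Nat.add_comm]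

lemma countP_univ_one {α : Type*} [Fintype α] {p : α → Prop} [DecidablePred p]
    (h : ∃! a, p a) : Multiset.countP p (Finset.univ.val) = 1 := by
  obtain ⟨a, ha, hu⟩ := h
  rw [Multiset.countP_eq_card_filter]
  have : Finset.univ.val.filter p = (Finset.univ.filter p).val := rfl
  rw [this]
  have h2 : Finset.univ.filter p = {a} := by
    apply Finset.eq_singleton_iff_unique_mem.mpr
    exact ⟨by simp [ha], fun b hb => hu b (by simpa using hb)⟩
  simp [h2]

lemma countP_univ_zero {α : Type*} [Fintype α] {p : α → Prop} [DecidablePred p]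
    (h : ∀ a, ¬ p a) : Multiset.countP p (Finset.univ.val) = 0 :=
  Multiset.countP_eq_zero.mpr (fun a _ => h a)

end CMDRRAux
namespace CMDRRAux

variable {n k m : ℕ}

lemma exists_spouse (S : CMDRR m m) (i : Fin m) : ∃ p, p ∈ S.spouses ∧ p.1 = i := by
  have hinj : Set.InjOn Prod.fst S.spouses := fun p hp q hq hpq =>
    S.spouses_inj1 p hp q hq hpq
  have h1 : S.spouses.image Prod.fst = Finset.univ := by
    apply Finset.eq_univ_of_card
    rw [Finset.card_image_of_injOn hinj, S.spouses_card]
    simp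
  have : i ∈ S.spouses.image Prod.fst := by rw [h1]; exact Finset.mem_univ i
  obtain ⟨p, hp, hpi⟩ := Finset.mem_image.mp this
  exact ⟨p, hp, hpi⟩

noncomputable def sigma (S : CMDRR m m) (i : Fin m) : Fin m :=
  (Classical.choose (exists_spouse S i)).2

lemma sigma_mem (S : CMDRR m m) (i : Fin m) : (i, sigma S i) ∈ S.spouses := by
  obtain ⟨h1, h2⟩ := Classical.choose_spec (exists_spouse S i)
  have h3 : Classical.choose (exists_spouse S i) = (i, sigma S i) := by
    apply Prod.ext <;> simp [sigma, h2]
  rwa [h3] at h1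

lemma mem_spouses_iff (S : CMDRR m m) {i j : Fin m} :
    (i, j) ∈ S.spouses ↔ j = sigma S i := by
  constructor
  · intro h
    have := S.spouses_inj1 _ h _ (sigma_mem S i) rfl
    exact (Prod.ext_iff.mp this).2
  · rintro rfl; exact sigma_mem S i

lemma sigma_injective (S : CMDRR m m) : Function.Injective (sigma S) := by
  intro i j h
  have := S.spouses_inj2 _ (sigma_mem S i) _ (sigma_mem S j) h
  exact (Prod.ext_iff.mp this).1

noncomputable def sigmaE (S : CMDRR m m) : Fin m ≃ Fin m :=
  Equiv.ofBijective _ (Finite.injective_iff_bijective.mp (sigma_injective S))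

lemma sigmaE_apply (S : CMDRR m m) (i : Fin m) : sigmaE S i = sigma S i := rfl

lemma spouses_image_fst (S : CMDRR m m) : S.spouses.image Prod.fst = Finset.univ := by
  apply Finset.eq_univ_iff_forall.mpr
  intro i
  exact Finset.mem_image.mpr ⟨(i, sigma S i), sigma_mem S i, rfl⟩

lemma spouses_image_snd (S : CMDRR m m) : S.spouses.image Prod.snd = Finset.univ := by
  apply Finset.eq_univ_iff_forall.mpr
  intro j
  refine Finset.mem_image.mpr ⟨((sigmaE S).symm j, j), ?_, rfl⟩
  have h : sigma S ((sigmaE S).symm j) = j := (sigmaE S).apply_symm_apply j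
  exact (mem_spouses_iff S).mpr h.symm

-- MOLS ∃! lemmas

lemma exUnique_row {L : Fin n × Fin n → Fin n}
    (hB : ∀ i, Function.Bijective fun j : Fin n => L (i, j)) (x x' : Fin n) :
    ∃! uv : Fin n × Fin n, uv.1 = x ∧ L uv = x' := by
  obtain ⟨v, hv, hvu⟩ := (hB x).existsUnique x'
  refine ⟨(x, v), ⟨rfl, hv⟩, ?_⟩
  rintro ⟨u', v'⟩ ⟨h1, h2⟩
  simp only at h1; subst h1
  have := hvu v' h2
  simp [this]

lemma exUnique_col {L : Fin n × Fin n → Fin n}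
    (hB : ∀ j, Function.Bijective fun i : Fin n => L (i, j)) (y y' : Fin n) :
    ∃! uv : Fin n × Fin n, uv.2 = y ∧ L uv = y' := by
  obtain ⟨u, hu, huu⟩ := (hB y).existsUnique y'
  refine ⟨(u, y), ⟨rfl, hu⟩, ?_⟩
  rintro ⟨u', v'⟩ ⟨h1, h2⟩
  simp only at h1; subst h1
  have := huu u' h2
  simp [this]

lemma exUnique_orth {L₁ L₂ : Fin n × Fin n → Fin n} (hL : MOLS L₁ L₂) (x y : Fin n) :
    ∃! uv : Fin n × Fin n, L₁ uv = x ∧ L₂ uv = y := by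
  obtain ⟨uv, huv, hu⟩ := hL.2.2.existsUnique (x, y)
  exact ⟨uv, by simpa [Prod.ext_iff] using huv,
    fun z hz => hu z (by simpa [Prod.ext_iff] using hz)⟩

end CMDRRAux
namespace CMDRRAux

section Main

variable {n k m : ℕ}

/-- The index equivalence. -/
def EE (m n : ℕ) : Fin m × Fin n ≃ Fin (m * n) := finProdFinEquiv

/-- Product spouses. -/
noncomputable def PS (T : CMDRR n k) (m : ℕ) : Finset (Fin (m * n) × Fin (m * n)) :=
  (Finset.univ ×ˢ T.spouses).image fun q : Fin m × (Fin n × Fin n) =>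
    (EE m n (q.1, q.2.1), EE m n (q.1, q.2.2))

lemma mem_PS_elim {T : CMDRR n k} {p : Fin (m * n) × Fin (m * n)} (hp : p ∈ PS T m) :
    ∃ i : Fin m, ∃ x y : Fin n, (x, y) ∈ T.spouses ∧ p = (EE m n (i, x), EE m n (i, y)) := by
  obtain ⟨⟨i, q⟩, hq, rfl⟩ := Finset.mem_image.mp hp
  exact ⟨i, q.1, q.2, by simpa using (Finset.mem_product.mp hq).2, rfl⟩

lemma mem_PS {T : CMDRR n k} {i j : Fin m} {x y : Fin n} :
    (EE m n (i, x), EE m n (j, y)) ∈ PS T m ↔ i = j ∧ (x, y) ∈ T.spouses := by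
  constructor
  · intro h
    obtain ⟨i', x', y', hs, hp⟩ := mem_PS_elim h
    rw [Prod.ext_iff] at hp
    simp only [Equiv.apply_eq_iff_eq, Prod.ext_iff] at hp
    obtain ⟨⟨h1, h2⟩, h3, h4⟩ := hp
    subst h1; subst h2; subst h3; subst h4; exact ⟨rfl, hs⟩
  · rintro ⟨rfl, hs⟩
    exact Finset.mem_image.mpr ⟨(i, (x, y)), by simpa using hs, rfl⟩

lemma PS_card (T : CMDRR n k) : (PS T m).card = m * k := by
  rw [PS, Finset.card_image_of_injOn, Finset.card_product, T.spouses_card,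
    Finset.card_univ, Fintype.card_fin]
  intro p _ q _ hpq
  simp only [Prod.ext_iff, Equiv.apply_eq_iff_eq] at hpq
  obtain ⟨⟨h1, h2⟩, h3, h4⟩ := hpq
  exact Prod.ext h1 (Prod.ext h2 h4)

lemma PS_image_fst {T : CMDRR n k} {j : Fin m} {x : Fin n} :
    EE m n (j, x) ∈ (PS T m).image Prod.fst ↔ x ∈ T.spouses.image Prod.fst := by
  constructor
  · intro h
    obtain ⟨p, hp, hpe⟩ := Finset.mem_image.mp h
    obtain ⟨i, x', y', hs, rfl⟩ := mem_PS_elim hp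
    simp only [Equiv.apply_eq_iff_eq, Prod.ext_iff] at hpe
    obtain ⟨h1, h2⟩ := hpe
    subst h2
    exact Finset.mem_image.mpr ⟨(x', y'), hs, rfl⟩
  · intro h
    obtain ⟨⟨x', y'⟩, hs, hh⟩ := Finset.mem_image.mp h
    simp only at hh; subst hh
    exact Finset.mem_image.mpr ⟨(EE m n (j, x'), EE m n (j, y')), mem_PS.mpr ⟨rfl, hs⟩, rfl⟩

lemma PS_image_snd {T : CMDRR n k} {j : Fin m} {y : Fin n} :
    EE m n (j, y) ∈ (PS T m).image Prod.snd ↔ y ∈ T.spouses.image Prod.snd := by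
  constructor
  · intro h
    obtain ⟨p, hp, hpe⟩ := Finset.mem_image.mp h
    obtain ⟨i, x', y', hs, rfl⟩ := mem_PS_elim hp
    simp only [Equiv.apply_eq_iff_eq, Prod.ext_iff] at hpe
    obtain ⟨h1, h2⟩ := hpe
    subst h2
    exact Finset.mem_image.mpr ⟨(x', y'), hs, rfl⟩
  · intro h
    obtain ⟨⟨x', y'⟩, hs, hh⟩ := Finset.mem_image.mp h
    simp only at hh; subst hh
    exact Finset.mem_image.mpr ⟨(EE m n (j, x'), EE m n (j, y')), mem_PS.mpr ⟨rfl, hs⟩, rfl⟩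

/-- Block relabeling. -/
def FF (m n : ℕ) (i : Fin m) : Fin n × Fin n → Fin (m * n) × Fin (m * n) :=
  fun u => (EE m n (i, u.1), EE m n (i, u.2))

noncomputable def blockGames (T : CMDRR n k) (m : ℕ) (i : Fin m) : Multiset (Game (m * n)) :=
  T.games.map (Sym2.map (FF m n i))

-- pointwise characterizations on mapped games
lemma partners_map_F {i j j' : Fin m} {x y : Fin n} (g : Game n) :
    Game.partners (EE m n (j, x)) (EE m n (j', y)) (Sym2.map (FF m n i) g) ↔
      j = i ∧ j' = i ∧ Game.partners x y g := by
  induction g using Sym2.ind with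
  | _ u v =>
    obtain ⟨u1, u2⟩ := u; obtain ⟨v1, v2⟩ := v
    rw [Sym2.map_pair_eq]
    simp only [partners_mk, FF, Prod.ext_iff, Equiv.apply_eq_iff_eq, Prod.mk.injEq]
    tauto

lemma opposesMW_map_F {i j j' : Fin m} {x y : Fin n} (g : Game n) :
    Game.opposesMW (EE m n (j, x)) (EE m n (j', y)) (Sym2.map (FF m n i) g) ↔
      j = i ∧ j' = i ∧ Game.opposesMW x y g := by
  induction g using Sym2.ind with
  | _ u v =>
    obtain ⟨u1, u2⟩ := u; obtain ⟨v1, v2⟩ := v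
    rw [Sym2.map_pair_eq]
    simp only [opposesMW_mk, FF, Prod.ext_iff, Equiv.apply_eq_iff_eq, Prod.mk.injEq]
    tauto

lemma opposesMM_map_F {i j j' : Fin m} {x y : Fin n} (g : Game n) :
    Game.opposesMM (EE m n (j, x)) (EE m n (j', y)) (Sym2.map (FF m n i) g) ↔
      j = i ∧ j' = i ∧ Game.opposesMM x y g := by
  induction g using Sym2.ind with
  | _ u v =>
    obtain ⟨u1, u2⟩ := u; obtain ⟨v1, v2⟩ := v
    rw [Sym2.map_pair_eq]
    simp only [opposesMM_mk, FF, Prod.ext_iff, Equiv.apply_eq_iff_eq, Prod.mk.injEq]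
    tauto

lemma opposesWW_map_F {i j j' : Fin m} {x y : Fin n} (g : Game n) :
    Game.opposesWW (EE m n (j, x)) (EE m n (j', y)) (Sym2.map (FF m n i) g) ↔
      j = i ∧ j' = i ∧ Game.opposesWW x y g := by
  induction g using Sym2.ind with
  | _ u v =>
    obtain ⟨u1, u2⟩ := u; obtain ⟨v1, v2⟩ := v
    rw [Sym2.map_pair_eq]
    simp only [opposesWW_mk, FF, Prod.ext_iff, Equiv.apply_eq_iff_eq, Prod.mk.injEq]
    tauto

lemma manIn_map_F {i j : Fin m} {x : Fin n} (g : Game n) :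
    Game.manIn (EE m n (j, x)) (Sym2.map (FF m n i) g) ↔ j = i ∧ Game.manIn x g := by
  induction g using Sym2.ind with
  | _ u v =>
    obtain ⟨u1, u2⟩ := u; obtain ⟨v1, v2⟩ := v
    rw [Sym2.map_pair_eq]
    simp only [manIn_mk, FF, Prod.ext_iff, Equiv.apply_eq_iff_eq, Prod.mk.injEq]
    tauto

lemma womanIn_map_F {i j : Fin m} {y : Fin n} (g : Game n) :
    Game.womanIn (EE m n (j, y)) (Sym2.map (FF m n i) g) ↔ j = i ∧ Game.womanIn y g := by
  induction g using Sym2.ind with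
  | _ u v =>
    obtain ⟨u1, u2⟩ := u; obtain ⟨v1, v2⟩ := v
    rw [Sym2.map_pair_eq]
    simp only [womanIn_mk, FF, Prod.ext_iff, Equiv.apply_eq_iff_eq, Prod.mk.injEq]
    tauto

/-- Generic block-count lemma. -/
lemma blocks_countP_gen (T : CMDRR n k) (P : Game (m * n) → Prop) (Q : Game n → Prop)
    (j j' : Fin m)
    (h : ∀ (i : Fin m) (g : Game n), P (Sym2.map (FF m n i) g) ↔ (j = i ∧ j' = i ∧ Q g)) :
    ((Finset.univ.val : Multiset (Fin m)).bind (blockGames T m)).countP P =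
      if j = j' then T.games.countP Q else 0 := by
  rw [countP_bind]
  have hterm : ∀ i : Fin m, (blockGames T m i).countP P =
      if j = i ∧ j' = i then T.games.countP Q else 0 := by
    intro i
    rw [blockGames, countP_map']
    by_cases hi : j = i ∧ j' = i
    · rw [if_pos hi]
      apply countP_iff_congr
      intro g _
      rw [h i g]
      simp [hi.1, hi.2]
    · rw [if_neg hi]
      apply Multiset.countP_eq_zero.mpr
      intro g _
      rw [h i g]
      tauto
  rw [Multiset.map_congr rfl (fun i _ => hterm i)]
  rw [show (Finset.univ.val.map fun i : Fin m =>
      if j = i ∧ j' = i then T.games.countP Q else 0).sum =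
    ∑ i : Fin m, (if j = i ∧ j' = i then T.games.countP Q else 0) from rfl]
  by_cases hjj : j = j'
  · subst hjj
    rw [if_pos rfl]
    have hsimp : ∀ i : Fin m, (if j = i ∧ j = i then T.games.countP Q else 0) =
        if j = i then T.games.countP Q else 0 := fun i => by simp
    rw [Finset.sum_congr rfl fun i _ => hsimp i, Finset.sum_ite_eq]
    simp
  · rw [if_neg hjj]
    apply Finset.sum_eq_zero
    intro i _
    rw [if_neg]
    rintro ⟨rfl, rfl⟩
    exact hjj rfl

end Main

end CMDRRAux
namespace CMDRRAux

section Cross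

variable {n k m : ℕ}

noncomputable def tauF (S : CMDRR m m) : Fin m → Fin m := (sigmaE S).symm

lemma sigma_tauF (S : CMDRR m m) (b : Fin m) : sigma S (tauF S b) = b :=
  (sigmaE S).apply_symm_apply b

lemma tauF_sigma (S : CMDRR m m) (i : Fin m) : tauF S (sigma S i) = i :=
  (sigmaE S).symm_apply_apply i

lemma tauF_injective (S : CMDRR m m) : Function.Injective (tauF S) :=
  (sigmaE S).symm.injective

lemma tau_eq_iff (S : CMDRR m m) {b j : Fin m} : tauF S b = j ↔ b = sigma S j := by
  constructor
  · rintro rfl; exact (sigma_tauF S b).symm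
  · rintro rfl; exact tauF_sigma S j

noncomputable def crossGen (S : CMDRR m m) (L₁ L₂ : Fin n × Fin n → Fin n)
    (a b c d : Fin m) : Multiset (Game (m * n)) :=
  Finset.univ.val.map fun uv : Fin n × Fin n =>
    s((EE m n (a, uv.1), EE m n (tauF S b, uv.2)),
      (EE m n (c, L₁ uv), EE m n (tauF S d, L₂ uv)))

noncomputable def crossG (S : CMDRR m m) (L₁ L₂ : Fin n × Fin n → Fin n) (g : Game m) :
    Multiset (Game (m * n)) :=
  crossGen S L₁ L₂ g.out.1.1 g.out.1.2 g.out.2.1 g.out.2.2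

lemma game_facts (S : CMDRR m m) {g : Game m} (hg : g ∈ S.games) {a b c d : Fin m}
    (hout : (s((a, b), (c, d)) : Game m) = g) :
    a ≠ c ∧ b ≠ d ∧ sigma S a ≠ b ∧ sigma S a ≠ d ∧ sigma S c ≠ b ∧ sigma S c ≠ d := by
  have hv := S.valid g hg
  rw [← hout, valid_mk] at hv
  have h1 := S.no_spouse_game g hg (a, sigma S a) (sigma_mem S a)
  have h2 := S.no_spouse_game g hg (c, sigma S c) (sigma_mem S c)
  rw [← hout] at h1 h2
  have hm1 : Game.manIn a s((a, b), (c, d)) := manIn_mk.mpr (Or.inl rfl)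
  have hm2 : Game.manIn c s((a, b), (c, d)) := manIn_mk.mpr (Or.inr rfl)
  have hw1 : ¬ Game.womanIn (sigma S a) s((a, b), (c, d)) := fun hw => h1 ⟨hm1, hw⟩
  have hw2 : ¬ Game.womanIn (sigma S c) s((a, b), (c, d)) := fun hw => h2 ⟨hm2, hw⟩
  rw [womanIn_mk] at hw1 hw2
  push_neg at hw1 hw2
  exact ⟨hv.1, hv.2, fun h => hw1.1 h.symm, fun h => hw1.2 h.symm,
    fun h => hw2.1 h.symm, fun h => hw2.2 h.symm⟩

lemma crossGen_countP_partners (S : CMDRR m m) {L₁ L₂ : Fin n × Fin n → Fin n}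
    (hL : MOLS L₁ L₂) (a b c d : Fin m) (hac : a ≠ c) (j j' : Fin m) (x y : Fin n) :
    (crossGen S L₁ L₂ a b c d).countP
        (Game.partners (EE m n (j, x)) (EE m n (j', y))) =
      if Game.partners j (sigma S j') (s((a, b), (c, d)) : Game m) then 1 else 0 := by
  have hpt : ∀ uv : Fin n × Fin n,
      Game.partners (EE m n (j, x)) (EE m n (j', y))
        s((EE m n (a, uv.1), EE m n (tauF S b, uv.2)),
          (EE m n (c, L₁ uv), EE m n (tauF S d, L₂ uv))) ↔
      ((j = a ∧ x = uv.1 ∧ j' = tauF S b ∧ y = uv.2) ∨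
       (j = c ∧ x = L₁ uv ∧ j' = tauF S d ∧ y = L₂ uv)) := by
    intro uv
    simp only [partners_mk, Prod.mk.injEq, Equiv.apply_eq_iff_eq]
    tauto
  rw [crossGen, countP_map']
  by_cases h1 : j = a ∧ j' = tauF S b
  · obtain ⟨rfl, rfl⟩ := h1
    rw [if_pos (partners_mk.mpr (Or.inl (by rw [sigma_tauF])))]
    apply countP_univ_one
    refine ⟨(x, y), ?_, ?_⟩
    · exact (hpt _).mpr (Or.inl ⟨rfl, rfl, rfl, rfl⟩)
    · rintro uv huv
      replace huv := (hpt uv).mp huv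
      rcases huv with ⟨_, hx2, _, hy2⟩ | ⟨hjc, _, _, _⟩
      · exact Prod.ext hx2.symm hy2.symm
      · exact absurd hjc hac
  · by_cases h2 : j = c ∧ j' = tauF S d
    · obtain ⟨rfl, rfl⟩ := h2
      rw [if_pos (partners_mk.mpr (Or.inr (by rw [sigma_tauF])))]
      apply countP_univ_one
      obtain ⟨uv0, huv0, hu⟩ := exUnique_orth hL x y
      refine ⟨uv0, ?_, ?_⟩
      · exact (hpt _).mpr (Or.inr ⟨rfl, huv0.1.symm, rfl, huv0.2.symm⟩)
      · rintro uv huv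
        replace huv := (hpt uv).mp huv
        rcases huv with ⟨hja, _, _, _⟩ | ⟨_, hx2, _, hy2⟩
        · exact absurd hja.symm hac
        · exact hu uv ⟨hx2.symm, hy2.symm⟩
    · rw [if_neg]
      · apply countP_univ_zero
        intro uv huv
        replace huv := (hpt uv).mp huv
        rcases huv with ⟨hja, _, hjb, _⟩ | ⟨hjc, _, hjd, _⟩
        · exact h1 ⟨hja, hjb⟩
        · exact h2 ⟨hjc, hjd⟩
      · intro hp
        rcases partners_mk.mp hp with hh | hh <;> rw [Prod.mk.injEq] at hh
        · exact h1 ⟨hh.1, ((tau_eq_iff S).mpr hh.2.symm).symm⟩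
        · exact h2 ⟨hh.1, ((tau_eq_iff S).mpr hh.2.symm).symm⟩

lemma crossGen_countP_opposesMW (S : CMDRR m m) {L₁ L₂ : Fin n × Fin n → Fin n}
    (hL : MOLS L₁ L₂) (a b c d : Fin m) (hac : a ≠ c) (j j' : Fin m) (x y : Fin n) :
    (crossGen S L₁ L₂ a b c d).countP
        (Game.opposesMW (EE m n (j, x)) (EE m n (j', y))) =
      if Game.opposesMW j (sigma S j') (s((a, b), (c, d)) : Game m) then 1 else 0 := by
  have hpt : ∀ uv : Fin n × Fin n,
      Game.opposesMW (EE m n (j, x)) (EE m n (j', y))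
        s((EE m n (a, uv.1), EE m n (tauF S b, uv.2)),
          (EE m n (c, L₁ uv), EE m n (tauF S d, L₂ uv))) ↔
      ((a = j ∧ uv.1 = x ∧ tauF S d = j' ∧ L₂ uv = y) ∨
       (c = j ∧ L₁ uv = x ∧ tauF S b = j' ∧ uv.2 = y)) := by
    intro uv
    simp only [opposesMW_mk, Prod.mk.injEq, Equiv.apply_eq_iff_eq]
    tauto
  rw [crossGen, countP_map']
  by_cases h1 : a = j ∧ tauF S d = j'
  · rw [if_pos (opposesMW_mk.mpr (Or.inl ⟨h1.1, by rw [← h1.2, sigma_tauF]⟩))]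
    apply countP_univ_one
    obtain ⟨uv0, huv0, hu⟩ := exUnique_row hL.2.1.1 x y
    refine ⟨uv0, ?_, ?_⟩
    · exact (hpt _).mpr (Or.inl ⟨h1.1, huv0.1, h1.2, huv0.2⟩)
    · rintro uv huv
      replace huv := (hpt uv).mp huv
      rcases huv with ⟨_, hx2, _, hy2⟩ | ⟨hjc, _, _, _⟩
      · exact hu uv ⟨hx2, hy2⟩
      · exact absurd (h1.1.trans hjc.symm) hac
  · by_cases h2 : c = j ∧ tauF S b = j'
    · rw [if_pos (opposesMW_mk.mpr (Or.inr ⟨h2.1, by rw [← h2.2, sigma_tauF]⟩))]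
      apply countP_univ_one
      obtain ⟨uv0, huv0, hu⟩ := exUnique_col hL.1.2 y x
      refine ⟨uv0, ?_, ?_⟩
      · exact (hpt _).mpr (Or.inr ⟨h2.1, huv0.2, h2.2, huv0.1⟩)
      · rintro uv huv
        replace huv := (hpt uv).mp huv
        rcases huv with ⟨hja, _, _, _⟩ | ⟨_, hx2, _, hy2⟩
        · exact absurd (hja.trans h2.1.symm) hac
        · exact hu uv ⟨hy2, hx2⟩
    · rw [if_neg]
      · apply countP_univ_zero
        intro uv huv
        replace huv := (hpt uv).mp huv
        rcases huv with ⟨hja, _, hjd, _⟩ | ⟨hjc, _, hjb, _⟩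
        · exact h1 ⟨hja, hjd⟩
        · exact h2 ⟨hjc, hjb⟩
      · intro hp
        rcases opposesMW_mk.mp hp with ⟨hh1, hh2⟩ | ⟨hh1, hh2⟩
        · exact h1 ⟨hh1, (tau_eq_iff S).mpr hh2⟩
        · exact h2 ⟨hh1, (tau_eq_iff S).mpr hh2⟩

lemma crossGen_countP_opposesMM (S : CMDRR m m) {L₁ L₂ : Fin n × Fin n → Fin n}
    (hL : MOLS L₁ L₂) (a b c d : Fin m) (hac : a ≠ c) (j j' : Fin m) (x x' : Fin n) :
    (crossGen S L₁ L₂ a b c d).countP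
        (Game.opposesMM (EE m n (j, x)) (EE m n (j', x'))) =
      if Game.opposesMM j j' (s((a, b), (c, d)) : Game m) then 1 else 0 := by
  have hpt : ∀ uv : Fin n × Fin n,
      Game.opposesMM (EE m n (j, x)) (EE m n (j', x'))
        s((EE m n (a, uv.1), EE m n (tauF S b, uv.2)),
          (EE m n (c, L₁ uv), EE m n (tauF S d, L₂ uv))) ↔
      ((a = j ∧ uv.1 = x ∧ c = j' ∧ L₁ uv = x') ∨
       (c = j ∧ L₁ uv = x ∧ a = j' ∧ uv.1 = x')) := by
    intro uv
    simp only [opposesMM_mk, Prod.mk.injEq, Equiv.apply_eq_iff_eq]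
    tauto
  rw [crossGen, countP_map']
  by_cases h1 : a = j ∧ c = j'
  · rw [if_pos (opposesMM_mk.mpr (Or.inl ⟨h1.1, h1.2⟩))]
    apply countP_univ_one
    obtain ⟨uv0, huv0, hu⟩ := exUnique_row hL.1.1 x x'
    refine ⟨uv0, ?_, ?_⟩
    · exact (hpt _).mpr (Or.inl ⟨h1.1, huv0.1, h1.2, huv0.2⟩)
    · rintro uv huv
      replace huv := (hpt uv).mp huv
      rcases huv with ⟨_, hx2, _, hy2⟩ | ⟨hjc, _, hja, _⟩
      · exact hu uv ⟨hx2, hy2⟩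
      · exact absurd (h1.1.trans hjc.symm) hac
  · by_cases h2 : c = j ∧ a = j'
    · rw [if_pos (opposesMM_mk.mpr (Or.inr ⟨h2.1, h2.2⟩))]
      apply countP_univ_one
      obtain ⟨uv0, huv0, hu⟩ := exUnique_row hL.1.1 x' x
      refine ⟨uv0, ?_, ?_⟩
      · exact (hpt _).mpr (Or.inr ⟨h2.1, huv0.2, h2.2, huv0.1⟩)
      · rintro uv huv
        replace huv := (hpt uv).mp huv
        rcases huv with ⟨hja, _, hjc, _⟩ | ⟨_, hx2, _, hy2⟩
        · exact absurd (hja.trans h2.1.symm) hac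
        · exact hu uv ⟨hy2, hx2⟩
    · rw [if_neg]
      · apply countP_univ_zero
        intro uv huv
        replace huv := (hpt uv).mp huv
        rcases huv with ⟨hja, _, hjc, _⟩ | ⟨hjc, _, hja, _⟩
        · exact h1 ⟨hja, hjc⟩
        · exact h2 ⟨hjc, hja⟩
      · intro hp
        rcases opposesMM_mk.mp hp with ⟨hh1, hh2⟩ | ⟨hh1, hh2⟩
        · exact h1 ⟨hh1, hh2⟩
        · exact h2 ⟨hh1, hh2⟩

lemma crossGen_countP_opposesWW (S : CMDRR m m) {L₁ L₂ : Fin n × Fin n → Fin n}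
    (hL : MOLS L₁ L₂) (a b c d : Fin m) (hbd : b ≠ d) (j j' : Fin m) (y y' : Fin n) :
    (crossGen S L₁ L₂ a b c d).countP
        (Game.opposesWW (EE m n (j, y)) (EE m n (j', y'))) =
      if Game.opposesWW (sigma S j) (sigma S j') (s((a, b), (c, d)) : Game m)
        then 1 else 0 := by
  have hpt : ∀ uv : Fin n × Fin n,
      Game.opposesWW (EE m n (j, y)) (EE m n (j', y'))
        s((EE m n (a, uv.1), EE m n (tauF S b, uv.2)),
          (EE m n (c, L₁ uv), EE m n (tauF S d, L₂ uv))) ↔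
      ((tauF S b = j ∧ uv.2 = y ∧ tauF S d = j' ∧ L₂ uv = y') ∨
       (tauF S d = j ∧ L₂ uv = y ∧ tauF S b = j' ∧ uv.2 = y')) := by
    intro uv
    simp only [opposesWW_mk, Prod.mk.injEq, Equiv.apply_eq_iff_eq]
    tauto
  have htau : tauF S b ≠ tauF S d := fun h => hbd (tauF_injective S h)
  rw [crossGen, countP_map']
  by_cases h1 : tauF S b = j ∧ tauF S d = j'
  · rw [if_pos (opposesWW_mk.mpr (Or.inl ⟨by rw [← h1.1, sigma_tauF],
      by rw [← h1.2, sigma_tauF]⟩))]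
    apply countP_univ_one
    obtain ⟨uv0, huv0, hu⟩ := exUnique_col hL.2.1.2 y y'
    refine ⟨uv0, ?_, ?_⟩
    · exact (hpt _).mpr (Or.inl ⟨h1.1, huv0.1, h1.2, huv0.2⟩)
    · rintro uv huv
      replace huv := (hpt uv).mp huv
      rcases huv with ⟨_, hx2, _, hy2⟩ | ⟨hjd, _, _, _⟩
      · exact hu uv ⟨hx2, hy2⟩
      · exact absurd (h1.1.trans hjd.symm) htau
  · by_cases h2 : tauF S d = j ∧ tauF S b = j'
    · rw [if_pos (opposesWW_mk.mpr (Or.inr ⟨by rw [← h2.1, sigma_tauF],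
        by rw [← h2.2, sigma_tauF]⟩))]
      apply countP_univ_one
      obtain ⟨uv0, huv0, hu⟩ := exUnique_col hL.2.1.2 y' y
      refine ⟨uv0, ?_, ?_⟩
      · exact (hpt _).mpr (Or.inr ⟨h2.1, huv0.2, h2.2, huv0.1⟩)
      · rintro uv huv
        replace huv := (hpt uv).mp huv
        rcases huv with ⟨hjb, _, _, _⟩ | ⟨_, hx2, _, hy2⟩
        · exact absurd (hjb.trans h2.1.symm) htau
        · exact hu uv ⟨hy2, hx2⟩
    · rw [if_neg]
      · apply countP_univ_zero
        intro uv huv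
        replace huv := (hpt uv).mp huv
        rcases huv with ⟨hjb, _, hjd, _⟩ | ⟨hjd, _, hjb, _⟩
        · exact h1 ⟨hjb, hjd⟩
        · exact h2 ⟨hjd, hjb⟩
      · intro hp
        rcases opposesWW_mk.mp hp with ⟨hh1, hh2⟩ | ⟨hh1, hh2⟩
        · exact h1 ⟨(tau_eq_iff S).mpr hh1, (tau_eq_iff S).mpr hh2⟩
        · exact h2 ⟨(tau_eq_iff S).mpr hh1, (tau_eq_iff S).mpr hh2⟩

end Cross

end CMDRRAux
namespace CMDRRAux

section Assemble

variable {n k m : ℕ}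

lemma crossG_countP_partners (S : CMDRR m m) {L₁ L₂ : Fin n × Fin n → Fin n}
    (hL : MOLS L₁ L₂) {g : Game m} (hg : g ∈ S.games) (j j' : Fin m) (x y : Fin n) :
    (crossG S L₁ L₂ g).countP (Game.partners (EE m n (j, x)) (EE m n (j', y))) =
      if Game.partners j (sigma S j') g then 1 else 0 := by
  have hout : (s((g.out.1.1, g.out.1.2), (g.out.2.1, g.out.2.2)) : Game m) = g := g.out_eq
  obtain ⟨hac, hbd, -, -, -, -⟩ := game_facts S hg hout
  rw [crossG, crossGen_countP_partners S hL _ _ _ _ hac j j' x y, hout]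

lemma crossG_countP_opposesMW (S : CMDRR m m) {L₁ L₂ : Fin n × Fin n → Fin n}
    (hL : MOLS L₁ L₂) {g : Game m} (hg : g ∈ S.games) (j j' : Fin m) (x y : Fin n) :
    (crossG S L₁ L₂ g).countP (Game.opposesMW (EE m n (j, x)) (EE m n (j', y))) =
      if Game.opposesMW j (sigma S j') g then 1 else 0 := by
  have hout : (s((g.out.1.1, g.out.1.2), (g.out.2.1, g.out.2.2)) : Game m) = g := g.out_eq
  obtain ⟨hac, hbd, -, -, -, -⟩ := game_facts S hg hout
  rw [crossG, crossGen_countP_opposesMW S hL _ _ _ _ hac j j' x y, hout]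

lemma crossG_countP_opposesMM (S : CMDRR m m) {L₁ L₂ : Fin n × Fin n → Fin n}
    (hL : MOLS L₁ L₂) {g : Game m} (hg : g ∈ S.games) (j j' : Fin m) (x x' : Fin n) :
    (crossG S L₁ L₂ g).countP (Game.opposesMM (EE m n (j, x)) (EE m n (j', x'))) =
      if Game.opposesMM j j' g then 1 else 0 := by
  have hout : (s((g.out.1.1, g.out.1.2), (g.out.2.1, g.out.2.2)) : Game m) = g := g.out_eq
  obtain ⟨hac, hbd, -, -, -, -⟩ := game_facts S hg hout
  rw [crossG, crossGen_countP_opposesMM S hL _ _ _ _ hac j j' x x', hout]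

lemma crossG_countP_opposesWW (S : CMDRR m m) {L₁ L₂ : Fin n × Fin n → Fin n}
    (hL : MOLS L₁ L₂) {g : Game m} (hg : g ∈ S.games) (j j' : Fin m) (y y' : Fin n) :
    (crossG S L₁ L₂ g).countP (Game.opposesWW (EE m n (j, y)) (EE m n (j', y'))) =
      if Game.opposesWW (sigma S j) (sigma S j') g then 1 else 0 := by
  have hout : (s((g.out.1.1, g.out.1.2), (g.out.2.1, g.out.2.2)) : Game m) = g := g.out_eq
  obtain ⟨hac, hbd, -, -, -, -⟩ := game_facts S hg hout
  rw [crossG, crossGen_countP_opposesWW S hL _ _ _ _ hbd j j' y y', hout]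

lemma cross_bind_countP (S : CMDRR m m) (L₁ L₂ : Fin n × Fin n → Fin n)
    (P : Game (m * n) → Prop) (Q : Game m → Prop)
    (h : ∀ g ∈ S.games, (crossG S L₁ L₂ g).countP P = if Q g then 1 else 0) :
    (S.games.bind (crossG S L₁ L₂)).countP P = S.games.countP Q := by
  rw [countP_bind, Multiset.map_congr rfl h, ← countP_eq_sum_indicator]

lemma not_partners_self (S : CMDRR m m) {g : Game m} (hg : g ∈ S.games) (j : Fin m) :
    ¬ Game.partners j (sigma S j) g := by
  intro hp
  have hout : (s((g.out.1.1, g.out.1.2), (g.out.2.1, g.out.2.2)) : Game m) = g := g.out_eq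
  rw [← hout, partners_mk] at hp
  have hns := S.no_spouse_game g hg (j, sigma S j) (sigma_mem S j)
  rcases hp with h | h <;> rw [Prod.mk.injEq] at h
  · exact hns ⟨by rw [← hout]; exact manIn_mk.mpr (Or.inl h.1.symm),
      by rw [← hout]; exact womanIn_mk.mpr (Or.inl h.2.symm)⟩
  · exact hns ⟨by rw [← hout]; exact manIn_mk.mpr (Or.inr h.1.symm),
      by rw [← hout]; exact womanIn_mk.mpr (Or.inr h.2.symm)⟩

lemma not_opposesMW_self (S : CMDRR m m) {g : Game m} (hg : g ∈ S.games) (j : Fin m) :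
    ¬ Game.opposesMW j (sigma S j) g := by
  intro hp
  have hout : (s((g.out.1.1, g.out.1.2), (g.out.2.1, g.out.2.2)) : Game m) = g := g.out_eq
  rw [← hout, opposesMW_mk] at hp
  have hns := S.no_spouse_game g hg (j, sigma S j) (sigma_mem S j)
  rcases hp with ⟨h1, h2⟩ | ⟨h1, h2⟩
  · exact hns ⟨by rw [← hout]; exact manIn_mk.mpr (Or.inl h1),
      by rw [← hout]; exact womanIn_mk.mpr (Or.inr h2)⟩
  · exact hns ⟨by rw [← hout]; exact manIn_mk.mpr (Or.inr h1),
      by rw [← hout]; exact womanIn_mk.mpr (Or.inl h2)⟩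

lemma not_opposesMM_self (S : CMDRR m m) {g : Game m} (hg : g ∈ S.games) (j : Fin m) :
    ¬ Game.opposesMM j j g := by
  intro hp
  have hout : (s((g.out.1.1, g.out.1.2), (g.out.2.1, g.out.2.2)) : Game m) = g := g.out_eq
  obtain ⟨hac, -, -, -, -, -⟩ := game_facts S hg hout
  rw [← hout, opposesMM_mk] at hp
  rcases hp with ⟨h1, h2⟩ | ⟨h1, h2⟩
  · exact hac (h1.trans h2.symm)
  · exact hac (h2.trans h1.symm)

lemma not_opposesWW_self (S : CMDRR m m) {g : Game m} (hg : g ∈ S.games) (w : Fin m) :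
    ¬ Game.opposesWW w w g := by
  intro hp
  have hout : (s((g.out.1.1, g.out.1.2), (g.out.2.1, g.out.2.2)) : Game m) = g := g.out_eq
  obtain ⟨-, hbd, -, -, -, -⟩ := game_facts S hg hout
  rw [← hout, opposesWW_mk] at hp
  rcases hp with ⟨h1, h2⟩ | ⟨h1, h2⟩
  · exact hbd (h1.trans h2.symm)
  · exact hbd (h2.trans h1.symm)

lemma product_nonempty (T : CMDRR n k) (S : CMDRR m m)
    {L₁ L₂ : Fin n × Fin n → Fin n} (hL : MOLS L₁ L₂) :
    Nonempty (CMDRR (m * n) (m * k)) := by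
  refine ⟨⟨PS T m, PS_card T, ?_, ?_,
    (Finset.univ.val.bind (blockGames T m)) + (S.games.bind (crossG S L₁ L₂)),
    ?_, ?_, ?_, ?_, ?_, ?_, ?_, ?_⟩⟩
  -- spouses_inj1
  · intro p hp q hq hpq
    obtain ⟨i, x, y, hs, rfl⟩ := mem_PS_elim hp
    obtain ⟨i', x', y', hs', rfl⟩ := mem_PS_elim hq
    simp only [Equiv.apply_eq_iff_eq, Prod.mk.injEq] at hpq
    obtain ⟨rfl, rfl⟩ := hpq
    have := T.spouses_inj1 (x, y) hs (x, y') hs' rfl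
    rw [Prod.mk.injEq] at this
    rw [this.2]
  -- spouses_inj2
  · intro p hp q hq hpq
    obtain ⟨i, x, y, hs, rfl⟩ := mem_PS_elim hp
    obtain ⟨i', x', y', hs', rfl⟩ := mem_PS_elim hq
    simp only [Equiv.apply_eq_iff_eq, Prod.mk.injEq] at hpq
    obtain ⟨rfl, rfl⟩ := hpq
    have := T.spouses_inj2 (x, y) hs (x', y) hs' rfl
    rw [Prod.mk.injEq] at this
    rw [this.1]
  -- valid
  · intro g hg
    rcases Multiset.mem_add.mp hg with hgB | hgC
    · obtain ⟨i, -, hgB⟩ := Multiset.mem_bind.mp hgB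
      obtain ⟨g₀, hg₀, rfl⟩ := Multiset.mem_map.mp hgB
      have hv := T.valid g₀ hg₀
      induction g₀ using Sym2.ind with
      | _ u v =>
        rw [valid_mk] at hv
        rw [Sym2.map_pair_eq]
        refine valid_mk.mpr ⟨?_, ?_⟩ <;>
          simp only [FF, ne_eq, Equiv.apply_eq_iff_eq, Prod.mk.injEq, not_and] <;>
          intro _ <;> [exact hv.1; exact hv.2]
    · obtain ⟨g', hg', hgC⟩ := Multiset.mem_bind.mp hgC
      have hout : (s((g'.out.1.1, g'.out.1.2), (g'.out.2.1, g'.out.2.2)) : Game m) = g' :=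
        g'.out_eq
      obtain ⟨hac, hbd, -, -, -, -⟩ := game_facts S hg' hout
      rw [crossG, crossGen] at hgC
      obtain ⟨uv, -, rfl⟩ := Multiset.mem_map.mp hgC
      refine valid_mk.mpr ⟨?_, ?_⟩ <;>
        simp only [ne_eq, Equiv.apply_eq_iff_eq, Prod.mk.injEq, not_and]
      · intro h; exact absurd h hac
      · intro h; exact absurd (tauF_injective S h) hbd
  -- no_spouse_game
  · intro g hg p hp
    obtain ⟨ℓ, px, py, hps, rfl⟩ := mem_PS_elim hp
    rintro ⟨hman, hwoman⟩
    rcases Multiset.mem_add.mp hg with hgB | hgC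
    · obtain ⟨i, -, hgB⟩ := Multiset.mem_bind.mp hgB
      obtain ⟨g₀, hg₀, rfl⟩ := Multiset.mem_map.mp hgB
      obtain ⟨-, hman'⟩ := (manIn_map_F g₀).mp hman
      obtain ⟨-, hwoman'⟩ := (womanIn_map_F g₀).mp hwoman
      exact T.no_spouse_game g₀ hg₀ (px, py) hps ⟨hman', hwoman'⟩
    · obtain ⟨g', hg', hgC⟩ := Multiset.mem_bind.mp hgC
      have hout : (s((g'.out.1.1, g'.out.1.2), (g'.out.2.1, g'.out.2.2)) : Game m) = g' :=
        g'.out_eq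
      obtain ⟨-, -, hs1, hs2, hs3, hs4⟩ := game_facts S hg' hout
      rw [crossG, crossGen] at hgC
      obtain ⟨uv, -, rfl⟩ := Multiset.mem_map.mp hgC
      rw [manIn_mk] at hman
      rw [womanIn_mk] at hwoman
      simp only [Equiv.apply_eq_iff_eq, Prod.mk.injEq] at hman hwoman
      have hm : ℓ = g'.out.1.1 ∨ ℓ = g'.out.2.1 := by
        rcases hman with ⟨h, -⟩ | ⟨h, -⟩
        exacts [Or.inl h.symm, Or.inr h.symm]
      have hw : sigma S ℓ = g'.out.1.2 ∨ sigma S ℓ = g'.out.2.2 := by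
        rcases hwoman with ⟨h, -⟩ | ⟨h, -⟩
        · exact Or.inl ((tau_eq_iff S).mp h).symm
        · exact Or.inr ((tau_eq_iff S).mp h).symm
      rcases hm with rfl | rfl <;> rcases hw with hw | hw
      exacts [hs1 hw, hs2 hw, hs3 hw, hs4 hw]
  -- partners_once
  · intro M W hMW
    obtain ⟨⟨j, x⟩, rfl⟩ := (EE m n).surjective M
    obtain ⟨⟨j', y⟩, rfl⟩ := (EE m n).surjective W
    rw [Multiset.countP_add,
      blocks_countP_gen T _ (Game.partners x y) j j' (fun i g => partners_map_F g),
      cross_bind_countP S L₁ L₂ _ (Game.partners j (sigma S j'))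
        (fun g hg => crossG_countP_partners S hL hg j j' x y)]
    by_cases hjj : j = j'
    · subst hjj
      rw [if_pos rfl]
      have hx : (x, y) ∉ T.spouses := fun hs => hMW (mem_PS.mpr ⟨rfl, hs⟩)
      rw [T.partners_once x y hx,
        Multiset.countP_eq_zero.mpr (fun g hg hp => not_partners_self S hg j hp)]
    · rw [if_neg hjj]
      have hns : (j, sigma S j') ∉ S.spouses := fun hs =>
        hjj (sigma_injective S ((mem_spouses_iff S).mp hs)).symm
      rw [S.partners_once j (sigma S j') hns]
  -- opposesMW_once
  · intro M W hMW
    obtain ⟨⟨j, x⟩, rfl⟩ := (EE m n).surjective M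
    obtain ⟨⟨j', y⟩, rfl⟩ := (EE m n).surjective W
    rw [Multiset.countP_add,
      blocks_countP_gen T _ (Game.opposesMW x y) j j' (fun i g => opposesMW_map_F g),
      cross_bind_countP S L₁ L₂ _ (Game.opposesMW j (sigma S j'))
        (fun g hg => crossG_countP_opposesMW S hL hg j j' x y)]
    by_cases hjj : j = j'
    · subst hjj
      rw [if_pos rfl]
      have hx : (x, y) ∉ T.spouses := fun hs => hMW (mem_PS.mpr ⟨rfl, hs⟩)
      rw [T.opposesMW_once x y hx,
        Multiset.countP_eq_zero.mpr (fun g hg hp => not_opposesMW_self S hg j hp)]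
    · rw [if_neg hjj]
      have hns : (j, sigma S j') ∉ S.spouses := fun hs =>
        hjj (sigma_injective S ((mem_spouses_iff S).mp hs)).symm
      rw [S.opposesMW_once j (sigma S j') hns]
  -- spousedM_opposes
  · intro M hM M' hM'
    obtain ⟨⟨j, x⟩, rfl⟩ := (EE m n).surjective M
    obtain ⟨⟨j', x'⟩, rfl⟩ := (EE m n).surjective M'
    rw [Multiset.countP_add,
      blocks_countP_gen T _ (Game.opposesMM x x') j j' (fun i g => opposesMM_map_F g),
      cross_bind_countP S L₁ L₂ _ (Game.opposesMM j j')
        (fun g hg => crossG_countP_opposesMM S hL hg j j' x x')]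
    by_cases hjj : j = j'
    · subst hjj
      rw [if_pos rfl]
      have hx' : x' ≠ x := fun h => hM' (by rw [h])
      rw [T.spousedM_opposes x (PS_image_fst.mp hM) x' hx',
        Multiset.countP_eq_zero.mpr (fun g hg hp => not_opposesMM_self S hg j hp)]
    · rw [if_neg hjj,
        S.spousedM_opposes j (by rw [spouses_image_fst]; exact Finset.mem_univ j) j'
          (fun h => hjj h.symm)]
  -- spousedW_opposes
  · intro W hW W' hW'
    obtain ⟨⟨j, y⟩, rfl⟩ := (EE m n).surjective W
    obtain ⟨⟨j', y'⟩, rfl⟩ := (EE m n).surjective W'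
    rw [Multiset.countP_add,
      blocks_countP_gen T _ (Game.opposesWW y y') j j' (fun i g => opposesWW_map_F g),
      cross_bind_countP S L₁ L₂ _ (Game.opposesWW (sigma S j) (sigma S j'))
        (fun g hg => crossG_countP_opposesWW S hL hg j j' y y')]
    by_cases hjj : j = j'
    · subst hjj
      rw [if_pos rfl]
      have hy' : y' ≠ y := fun h => hW' (by rw [h])
      rw [T.spousedW_opposes y (PS_image_snd.mp hW) y' hy',
        Multiset.countP_eq_zero.mpr (fun g hg hp => not_opposesWW_self S hg (sigma S j) hp)]
    · rw [if_neg hjj,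
        S.spousedW_opposes (sigma S j) (by rw [spouses_image_snd]; exact Finset.mem_univ _)
          (sigma S j') (fun h => hjj (sigma_injective S h).symm)]
  -- unspousedM_opposes
  · intro M hM
    obtain ⟨⟨j, x⟩, rfl⟩ := (EE m n).surjective M
    have hx : x ∉ T.spouses.image Prod.fst := fun h => hM (PS_image_fst.mpr h)
    obtain ⟨x', hxne, hxuns, h2, h1⟩ := T.unspousedM_opposes x hx
    refine ⟨EE m n (j, x'), ?_, ?_, ?_, ?_⟩
    · intro h
      simp only [Equiv.apply_eq_iff_eq, Prod.mk.injEq] at h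
      exact hxne h.2
    · exact fun h => hxuns (PS_image_fst.mp h)
    · rw [Multiset.countP_add,
        blocks_countP_gen T _ (Game.opposesMM x x') j j (fun i g => opposesMM_map_F g),
        cross_bind_countP S L₁ L₂ _ (Game.opposesMM j j)
          (fun g hg => crossG_countP_opposesMM S hL hg j j x x'),
        if_pos rfl, h2,
        Multiset.countP_eq_zero.mpr (fun g hg hp => not_opposesMM_self S hg j hp)]
    · intro M'' hne1 hne2
      obtain ⟨⟨j'', x''⟩, rfl⟩ := (EE m n).surjective M''
      rw [Multiset.countP_add,
        blocks_countP_gen T _ (Game.opposesMM x x'') j j'' (fun i g => opposesMM_map_F g),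
        cross_bind_countP S L₁ L₂ _ (Game.opposesMM j j'')
          (fun g hg => crossG_countP_opposesMM S hL hg j j'' x x'')]
      by_cases hjj : j = j''
      · subst hjj
        rw [if_pos rfl]
        have hx1 : x'' ≠ x := fun h => hne1 (by rw [h])
        have hx2 : x'' ≠ x' := fun h => hne2 (by rw [h])
        rw [h1 x'' hx1 hx2,
          Multiset.countP_eq_zero.mpr (fun g hg hp => not_opposesMM_self S hg j hp)]
      · rw [if_neg hjj,
          S.spousedM_opposes j (by rw [spouses_image_fst]; exact Finset.mem_univ j) j''
            (fun h => hjj h.symm)]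
  -- unspousedW_opposes
  · intro W hW
    obtain ⟨⟨j, y⟩, rfl⟩ := (EE m n).surjective W
    have hy : y ∉ T.spouses.image Prod.snd := fun h => hW (PS_image_snd.mpr h)
    obtain ⟨y', hyne, hyuns, h2, h1⟩ := T.unspousedW_opposes y hy
    refine ⟨EE m n (j, y'), ?_, ?_, ?_, ?_⟩
    · intro h
      simp only [Equiv.apply_eq_iff_eq, Prod.mk.injEq] at h
      exact hyne h.2
    · exact fun h => hyuns (PS_image_snd.mp h)
    · rw [Multiset.countP_add,
        blocks_countP_gen T _ (Game.opposesWW y y') j j (fun i g => opposesWW_map_F g),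
        cross_bind_countP S L₁ L₂ _ (Game.opposesWW (sigma S j) (sigma S j))
          (fun g hg => crossG_countP_opposesWW S hL hg j j y y'),
        if_pos rfl, h2,
        Multiset.countP_eq_zero.mpr (fun g hg hp => not_opposesWW_self S hg (sigma S j) hp)]
    · intro W'' hne1 hne2
      obtain ⟨⟨j'', y''⟩, rfl⟩ := (EE m n).surjective W''
      rw [Multiset.countP_add,
        blocks_countP_gen T _ (Game.opposesWW y y'') j j'' (fun i g => opposesWW_map_F g),
        cross_bind_countP S L₁ L₂ _ (Game.opposesWW (sigma S j) (sigma S j''))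
          (fun g hg => crossG_countP_opposesWW S hL hg j j'' y y'')]
      by_cases hjj : j = j''
      · subst hjj
        rw [if_pos rfl]
        have hy1 : y'' ≠ y := fun h => hne1 (by rw [h])
        have hy2 : y'' ≠ y' := fun h => hne2 (by rw [h])
        rw [h1 y'' hy1 hy2,
          Multiset.countP_eq_zero.mpr (fun g hg hp => not_opposesWW_self S hg (sigma S j) hp)]
      · rw [if_neg hjj,
          S.spousedW_opposes (sigma S j) (by rw [spouses_image_snd]; exact Finset.mem_univ _)
            (sigma S j'') (fun h => hjj (sigma_injective S h).symm)]

end Assemble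

end CMDRRAux

/-- Product theorem: a CMDRR(n,k), a SAMDRR(m) (i.e. a CMDRR(m,m)), and two MOLS
of order `n` yield a CMDRR(mn, mk). -/
theorem cmdrr_product (n k m : ℕ) (hT : Nonempty (CMDRR n k))
    (hS : Nonempty (CMDRR m m)) (L₁ L₂ : Fin n × Fin n → Fin n)
    (hL : MOLS L₁ L₂) : Nonempty (CMDRR (m * n) (m * k)) := by
  obtain ⟨T⟩ := hT
  obtain ⟨S⟩ := hS
  exact CMDRRAux.product_nonempty T S hL
end

section
/- Suppose there exists a holey self-orthogonal latin square of order n with holes H_1, …, H_m of sizes h_1, …, h_m (which partition the index set), and for each i ∈ {1, …, m} there exists a CMDRR(h_i, k_i), where for h_i = 1 one allows the trivial CMDRR(1,1) consisting of one spouse pair and no games. Then there exists a CMDRR(n, k_1 + k_2 + ⋯ + k_m). -/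
open scoped Classical

/-- A holey self-orthogonal latin square of order `n`, whose holes are the
(nonempty) fibers of `hole : Fin n → Fin m`.  The array is (morally) defined
exactly on cells `(i, j)` with `hole i ≠ hole j`; we use a total function,
with all conditions quantified only over such cells. -/
structure HSOLS (n m : ℕ) (hole : Fin n → Fin m) where
  L : Fin n → Fin n → Fin n
  /-- each row `i` contains every symbol not in the hole of `i` exactly once -/
  row_once : ∀ i s : Fin n, hole s ≠ hole i →
    ∃! j : Fin n, hole j ≠ hole i ∧ L i j = s
  /-- and no symbol from the hole of `i`. -/
  row_no_hole : ∀ i j : Fin n, hole j ≠ hole i → hole (L i j) ≠ hole i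
  /-- each column `j` contains every symbol not in the hole of `j` exactly once -/
  col_once : ∀ j s : Fin n, hole s ≠ hole j →
    ∃! i : Fin n, hole i ≠ hole j ∧ L i j = s
  /-- and no symbol from the hole of `j`. -/
  col_no_hole : ∀ i j : Fin n, hole i ≠ hole j → hole (L i j) ≠ hole j
  /-- self-orthogonality: superimposing `L` with its transpose, the ordered
  pairs `(L i j, L j i)` over defined cells are exactly the ordered pairs of
  symbols from different holes, each exactly once. -/
  orth : ∀ s t : Fin n, hole s ≠ hole t →
    ∃! p : Fin n × Fin n, hole p.1 ≠ hole p.2 ∧ L p.1 p.2 = s ∧ L p.2 p.1 = t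

namespace CMDRRfill

open Finset

variable {n m : ℕ}

lemma manIn_mk {mm : Fin n} {a b : Fin n × Fin n} :
    Game.manIn mm s(a, b) ↔ a.1 = mm ∨ b.1 = mm := by
  constructor
  · rintro ⟨a', b', h, rfl⟩
    rcases Sym2.eq_iff.mp h with ⟨rfl, rfl⟩ | ⟨rfl, rfl⟩
    · exact Or.inl rfl
    · exact Or.inr rfl
  · rintro (rfl | rfl)
    · exact ⟨a, b, rfl, rfl⟩
    · exact ⟨b, a, Sym2.eq_swap, rfl⟩

lemma womanIn_mk {w : Fin n} {a b : Fin n × Fin n} :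
    Game.womanIn w s(a, b) ↔ a.2 = w ∨ b.2 = w := by
  constructor
  · rintro ⟨a', b', h, rfl⟩
    rcases Sym2.eq_iff.mp h with ⟨rfl, rfl⟩ | ⟨rfl, rfl⟩
    · exact Or.inl rfl
    · exact Or.inr rfl
  · rintro (rfl | rfl)
    · exact ⟨a, b, rfl, rfl⟩
    · exact ⟨b, a, Sym2.eq_swap, rfl⟩

lemma partners_mk {mm w : Fin n} {a b : Fin n × Fin n} :
    Game.partners mm w s(a, b) ↔ (mm, w) = a ∨ (mm, w) = b := Sym2.mem_iff

lemma opposesMW_mk {mm w : Fin n} {a b : Fin n × Fin n} :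
    Game.opposesMW mm w s(a, b) ↔ (a.1 = mm ∧ b.2 = w) ∨ (b.1 = mm ∧ a.2 = w) := by
  constructor
  · rintro ⟨a', b', h, rfl, rfl⟩
    rcases Sym2.eq_iff.mp h with ⟨rfl, rfl⟩ | ⟨rfl, rfl⟩
    · exact Or.inl ⟨rfl, rfl⟩
    · exact Or.inr ⟨rfl, rfl⟩
  · rintro (⟨h1, h2⟩ | ⟨h1, h2⟩)
    · exact ⟨a, b, rfl, h1, h2⟩
    · exact ⟨b, a, Sym2.eq_swap, h1, h2⟩

lemma opposesMM_mk {mm m' : Fin n} {a b : Fin n × Fin n} :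
    Game.opposesMM mm m' s(a, b) ↔ (a.1 = mm ∧ b.1 = m') ∨ (b.1 = mm ∧ a.1 = m') := by
  constructor
  · rintro ⟨a', b', h, rfl, rfl⟩
    rcases Sym2.eq_iff.mp h with ⟨rfl, rfl⟩ | ⟨rfl, rfl⟩
    · exact Or.inl ⟨rfl, rfl⟩
    · exact Or.inr ⟨rfl, rfl⟩
  · rintro (⟨h1, h2⟩ | ⟨h1, h2⟩)
    · exact ⟨a, b, rfl, h1, h2⟩
    · exact ⟨b, a, Sym2.eq_swap, h1, h2⟩

lemma opposesWW_mk {w w' : Fin n} {a b : Fin n × Fin n} :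
    Game.opposesWW w w' s(a, b) ↔ (a.2 = w ∧ b.2 = w') ∨ (b.2 = w ∧ a.2 = w') := by
  constructor
  · rintro ⟨a', b', h, rfl, rfl⟩
    rcases Sym2.eq_iff.mp h with ⟨rfl, rfl⟩ | ⟨rfl, rfl⟩
    · exact Or.inl ⟨rfl, rfl⟩
    · exact Or.inr ⟨rfl, rfl⟩
  · rintro (⟨h1, h2⟩ | ⟨h1, h2⟩)
    · exact ⟨a, b, rfl, h1, h2⟩
    · exact ⟨b, a, Sym2.eq_swap, h1, h2⟩

lemma valid_mk {a b : Fin n × Fin n} (h1 : a.1 ≠ b.1) (h2 : a.2 ≠ b.2) :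
    Game.valid s(a, b) := ⟨a, b, rfl, h1, h2⟩

lemma countP_finsetSum {α β : Type*} (s : Finset β) (f : β → Multiset α) (P : α → Prop)
    [DecidablePred P] : (∑ i ∈ s, f i).countP P = ∑ i ∈ s, (f i).countP P := by
  classical
  induction s using Finset.induction with
  | empty => simp
  | insert _ _ h ih => rw [Finset.sum_insert h, Finset.sum_insert h, Multiset.countP_add, ih]

lemma countP_val_map_eq_one {α β : Type*} (s : Finset α) (f : α → β) (P : β → Prop)
    [DecidablePred P] (x : α) (hx : x ∈ s) (hPx : P (f x))
    (huniq : ∀ y ∈ s, P (f y) → y = x) :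
    (s.val.map f).countP P = 1 := by
  have hfil : s.filter (fun a => P (f a)) = {x} := by
    ext y
    simp only [Finset.mem_filter, Finset.mem_singleton]
    exact ⟨fun ⟨hy, hPy⟩ => huniq y hy hPy, fun h => h ▸ ⟨hx, hPx⟩⟩
  rw [Multiset.countP_map, ← Finset.filter_val, hfil]
  rfl

lemma countP_val_map_eq_zero {α β : Type*} (s : Finset α) (f : α → β) (P : β → Prop)
    [DecidablePred P] (h : ∀ y ∈ s, ¬ P (f y)) :
    (s.val.map f).countP P = 0 := by
  rw [Multiset.countP_eq_zero]
  rintro b hb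
  obtain ⟨a, ha, rfl⟩ := Multiset.mem_map.mp hb
  exact h a ha


section Construction

variable {n m : ℕ}

/-- hole size -/
abbrev hs (hole : Fin n → Fin m) (i : Fin m) : ℕ :=
  (Finset.univ.filter (fun x : Fin n => hole x = i)).card

noncomputable def E (hole : Fin n → Fin m) (i : Fin m) :
    {x : Fin n // hole x = i} ≃ Fin (hs hole i) :=
  Fintype.equivFinOfCardEq (Fintype.card_subtype _)

noncomputable def up (hole : Fin n → Fin m) (i : Fin m) (a : Fin (hs hole i)) : Fin n :=
  ((E hole i).symm a : Fin n)

variable {hole : Fin n → Fin m}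

@[simp] lemma hole_up {i : Fin m} (a : Fin (hs hole i)) : hole (up hole i a) = i :=
  ((E hole i).symm a).2

lemma up_inj (i : Fin m) : Function.Injective (up hole i) := fun a b h => by
  have := (E hole i).symm.injective (Subtype.ext h)
  exact this

lemma up_surj {i : Fin m} {x : Fin n} (hx : hole x = i) : ∃ a, up hole i a = x :=
  ⟨E hole i ⟨x, hx⟩, by simp [up]⟩

noncomputable def pm (hole : Fin n → Fin m) (i : Fin m)
    (q : Fin (hs hole i) × Fin (hs hole i)) : Fin n × Fin n :=
  (up hole i q.1, up hole i q.2)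

lemma pm_inj (i : Fin m) : Function.Injective (pm hole i) := by
  rintro ⟨a1, a2⟩ ⟨b1, b2⟩ h
  simp only [pm, Prod.mk.injEq] at h
  exact Prod.ext ((up_inj i) h.1) ((up_inj i) h.2)

lemma pm_eq_iff {i : Fin m} {x y : Fin (hs hole i)} {a : Fin (hs hole i) × Fin (hs hole i)} :
    (up hole i x, up hole i y) = pm hole i a ↔ (x, y) = a := by
  constructor
  · intro h; exact pm_inj i h
  · rintro rfl; rfl

noncomputable def emb (hole : Fin n → Fin m) (i : Fin m) : Game (hs hole i) → Game n :=
  Sym2.map (pm hole i)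

lemma emb_mk (i : Fin m) (a b : Fin (hs hole i) × Fin (hs hole i)) :
    emb hole i s(a, b) = s(pm hole i a, pm hole i b) := Sym2.map_pair_eq _ _ _

noncomputable def crossCells (hole : Fin n → Fin m) : Finset (Fin n × Fin n) :=
  Finset.univ.filter fun p => p.1 < p.2 ∧ hole p.1 ≠ hole p.2

noncomputable def gameOf (H : HSOLS n m hole) (p : Fin n × Fin n) : Game n :=
  s((p.1, H.L p.1 p.2), (p.2, H.L p.2 p.1))

lemma gameOf_swap (H : HSOLS n m hole) (a b : Fin n) :
    gameOf H (b, a) = gameOf H (a, b) := Sym2.eq_swap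

/-- key counting consequence of self-orthogonality -/
lemma crossSymb (H : HSOLS n m hole) (a b : Fin n) (hab : hole a ≠ hole b) :
    hole (H.L a b) ≠ hole (H.L b a) := by
  classical
  set S : Finset (Fin n × Fin n) := Finset.univ.filter (fun p => hole p.1 ≠ hole p.2) with hS
  set φ : Fin n × Fin n → Fin n × Fin n := fun p => (H.L p.1 p.2, H.L p.2 p.1) with hφ
  have fib : ∀ t ∈ S, (S.filter (fun p => φ p = t)).card = 1 := by
    intro t ht
    have ht' : hole t.1 ≠ hole t.2 := (Finset.mem_filter.mp ht).2
    obtain ⟨p0, ⟨hp0, e1, e2⟩, hu⟩ := H.orth t.1 t.2 ht'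
    rw [Finset.card_eq_one]
    refine ⟨p0, ?_⟩
    ext q
    simp only [Finset.mem_filter, Finset.mem_singleton, hS, Finset.mem_univ, true_and]
    constructor
    · rintro ⟨hq, he⟩
      exact hu q ⟨hq, congrArg Prod.fst he, congrArg Prod.snd he⟩
    · rintro rfl
      exact ⟨hp0, Prod.ext e1 e2⟩
  have key : S.filter (fun p => φ p ∈ S) = S := by
    apply Finset.eq_of_subset_of_card_le (Finset.filter_subset _ _)
    have h1 : (S.filter (fun p => φ p ∈ S)).card = ∑ t ∈ S, (S.filter (fun p => φ p = t)).card := by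
      rw [Finset.card_eq_sum_card_fiberwise
        (s := S.filter (fun p => φ p ∈ S)) (f := φ) (t := S) (fun p hp => (Finset.mem_filter.mp hp).2)]
      refine Finset.sum_congr rfl fun t ht => ?_
      congr 1
      ext p
      simp only [Finset.mem_filter]
      exact ⟨fun ⟨⟨hp, _⟩, he⟩ => ⟨hp, he⟩, fun ⟨hp, he⟩ => ⟨⟨hp, he ▸ ht⟩, he⟩⟩
    rw [h1, Finset.sum_congr rfl fib, Finset.sum_const, smul_eq_mul, mul_one]
  have hmem : (a, b) ∈ S := Finset.mem_filter.mpr ⟨Finset.mem_univ _, hab⟩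
  have := Finset.mem_filter.mp (key ▸ hmem)
  exact (Finset.mem_filter.mp this.2).2

section Transport

variable {hole : Fin n → Fin m}

lemma emb_manIn {i : Fin m} {x : Fin (hs hole i)} {g : Game (hs hole i)} :
    Game.manIn (up hole i x) (emb hole i g) ↔ Game.manIn x g := by
  induction g using Sym2.ind with
  | _ a b =>
    rw [emb_mk, manIn_mk, manIn_mk]
    simp only [pm, (up_inj (hole := hole) i).eq_iff]

lemma emb_womanIn {i : Fin m} {x : Fin (hs hole i)} {g : Game (hs hole i)} :
    Game.womanIn (up hole i x) (emb hole i g) ↔ Game.womanIn x g := by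
  induction g using Sym2.ind with
  | _ a b =>
    rw [emb_mk, womanIn_mk, womanIn_mk]
    simp only [pm, (up_inj (hole := hole) i).eq_iff]

lemma emb_partners {i : Fin m} {x y : Fin (hs hole i)} {g : Game (hs hole i)} :
    Game.partners (up hole i x) (up hole i y) (emb hole i g) ↔ Game.partners x y g := by
  induction g using Sym2.ind with
  | _ a b =>
    rw [emb_mk, partners_mk, partners_mk, pm_eq_iff, pm_eq_iff]

lemma emb_opposesMW {i : Fin m} {x y : Fin (hs hole i)} {g : Game (hs hole i)} :
    Game.opposesMW (up hole i x) (up hole i y) (emb hole i g) ↔ Game.opposesMW x y g := by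
  induction g using Sym2.ind with
  | _ a b =>
    rw [emb_mk, opposesMW_mk, opposesMW_mk]
    simp only [pm, (up_inj (hole := hole) i).eq_iff]

lemma emb_opposesMM {i : Fin m} {x y : Fin (hs hole i)} {g : Game (hs hole i)} :
    Game.opposesMM (up hole i x) (up hole i y) (emb hole i g) ↔ Game.opposesMM x y g := by
  induction g using Sym2.ind with
  | _ a b =>
    rw [emb_mk, opposesMM_mk, opposesMM_mk]
    simp only [pm, (up_inj (hole := hole) i).eq_iff]

lemma emb_opposesWW {i : Fin m} {x y : Fin (hs hole i)} {g : Game (hs hole i)} :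
    Game.opposesWW (up hole i x) (up hole i y) (emb hole i g) ↔ Game.opposesWW x y g := by
  induction g using Sym2.ind with
  | _ a b =>
    rw [emb_mk, opposesWW_mk, opposesWW_mk]
    simp only [pm, (up_inj (hole := hole) i).eq_iff]

lemma manIn_emb_hole {i : Fin m} {x : Fin n} {g : Game (hs hole i)}
    (h : Game.manIn x (emb hole i g)) : hole x = i := by
  induction g using Sym2.ind with
  | _ a b =>
    rw [emb_mk, manIn_mk] at h
    rcases h with h | h <;> · rw [← h]; simp [pm]

lemma womanIn_emb_hole {i : Fin m} {x : Fin n} {g : Game (hs hole i)}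
    (h : Game.womanIn x (emb hole i g)) : hole x = i := by
  induction g using Sym2.ind with
  | _ a b =>
    rw [emb_mk, womanIn_mk] at h
    rcases h with h | h <;> · rw [← h]; simp [pm]

lemma partners_emb_hole {i : Fin m} {x y : Fin n} {g : Game (hs hole i)}
    (h : Game.partners x y (emb hole i g)) : hole x = i ∧ hole y = i := by
  induction g using Sym2.ind with
  | _ a b =>
    rw [emb_mk, partners_mk] at h
    rcases h with h | h <;>
    · constructor
      · rw [show x = (Prod.fst (α := Fin n) (β := Fin n)) (x, y) from rfl, h]; simp [pm]
      · rw [show y = (Prod.snd (α := Fin n) (β := Fin n)) (x, y) from rfl, h]; simp [pm]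

lemma opposesMW_emb_hole {i : Fin m} {x y : Fin n} {g : Game (hs hole i)}
    (h : Game.opposesMW x y (emb hole i g)) : hole x = i ∧ hole y = i := by
  induction g using Sym2.ind with
  | _ a b =>
    rw [emb_mk, opposesMW_mk] at h
    rcases h with ⟨h1, h2⟩ | ⟨h1, h2⟩ <;> exact ⟨by rw [← h1]; simp [pm], by rw [← h2]; simp [pm]⟩

lemma opposesMM_emb_hole {i : Fin m} {x y : Fin n} {g : Game (hs hole i)}
    (h : Game.opposesMM x y (emb hole i g)) : hole x = i ∧ hole y = i := by
  induction g using Sym2.ind with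
  | _ a b =>
    rw [emb_mk, opposesMM_mk] at h
    rcases h with ⟨h1, h2⟩ | ⟨h1, h2⟩ <;> exact ⟨by rw [← h1]; simp [pm], by rw [← h2]; simp [pm]⟩

lemma opposesWW_emb_hole {i : Fin m} {x y : Fin n} {g : Game (hs hole i)}
    (h : Game.opposesWW x y (emb hole i g)) : hole x = i ∧ hole y = i := by
  induction g using Sym2.ind with
  | _ a b =>
    rw [emb_mk, opposesWW_mk] at h
    rcases h with ⟨h1, h2⟩ | ⟨h1, h2⟩ <;> exact ⟨by rw [← h1]; simp [pm], by rw [← h2]; simp [pm]⟩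

end Transport

section Big

variable {hole : Fin n → Fin m} (H : HSOLS n m hole) {k : Fin m → ℕ}
  (C : ∀ i : Fin m, CMDRR (hs hole i) (k i))

noncomputable def bigSpouses : Finset (Fin n × Fin n) :=
  Finset.univ.biUnion fun i => (C i).spouses.image (pm hole i)

lemma mem_bigSpouses {p : Fin n × Fin n} :
    p ∈ bigSpouses C ↔ ∃ i q, q ∈ (C i).spouses ∧ pm hole i q = p := by
  simp only [bigSpouses, Finset.mem_biUnion, Finset.mem_image, Finset.mem_univ, true_and]

lemma pm_mem_bigSpouses {i : Fin m} {q : Fin (hs hole i) × Fin (hs hole i)} :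
    pm hole i q ∈ bigSpouses C ↔ q ∈ (C i).spouses := by
  rw [mem_bigSpouses]
  constructor
  · rintro ⟨j, r, hr, he⟩
    have hj : j = i := by
      have := congrArg (fun z : Fin n × Fin n => hole z.1) he
      simpa [pm] using this
    subst hj
    rwa [pm_inj j he] at hr
  · exact fun h => ⟨i, q, h, rfl⟩

lemma up_mem_image_fst {i : Fin m} {x : Fin (hs hole i)} :
    up hole i x ∈ (bigSpouses C).image Prod.fst ↔ x ∈ (C i).spouses.image Prod.fst := by
  simp only [Finset.mem_image]
  constructor
  · rintro ⟨p, hp, he⟩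
    rw [mem_bigSpouses] at hp
    obtain ⟨j, q, hq, rfl⟩ := hp
    have hj : j = i := by
      have := congrArg hole he; simpa [pm] using this
    subst hj
    exact ⟨q, hq, up_inj j (by simpa [pm] using he)⟩
  · rintro ⟨q, hq, rfl⟩
    exact ⟨pm hole i q, (pm_mem_bigSpouses C).mpr hq, rfl⟩

lemma up_mem_image_snd {i : Fin m} {x : Fin (hs hole i)} :
    up hole i x ∈ (bigSpouses C).image Prod.snd ↔ x ∈ (C i).spouses.image Prod.snd := by
  simp only [Finset.mem_image]
  constructor
  · rintro ⟨p, hp, he⟩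
    rw [mem_bigSpouses] at hp
    obtain ⟨j, q, hq, rfl⟩ := hp
    have hj : j = i := by
      have := congrArg hole he; simpa [pm] using this
    subst hj
    exact ⟨q, hq, up_inj j (by simpa [pm] using he)⟩
  · rintro ⟨q, hq, rfl⟩
    exact ⟨pm hole i q, (pm_mem_bigSpouses C).mpr hq, rfl⟩

noncomputable def bigGames : Multiset (Game n) :=
  (crossCells hole).val.map (gameOf H) + ∑ i : Fin m, ((C i).games.map (emb hole i))

lemma bigGames_countP (P : Game n → Prop) [DecidablePred P] :
    (bigGames H C).countP P =
      ((crossCells hole).val.map (gameOf H)).countP P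
        + ∑ i : Fin m, (C i).games.countP (fun g => P (emb hole i g)) := by
  rw [bigGames, Multiset.countP_add, countP_finsetSum]
  congr 1
  refine Finset.sum_congr rfl fun i _ => ?_
  rw [Multiset.countP_map, Multiset.countP_eq_card_filter]

lemma crossCount_zero (P : Game n → Prop) [DecidablePred P]
    (h : ∀ p : Fin n × Fin n, hole p.1 ≠ hole p.2 → ¬ P (gameOf H p)) :
    ((crossCells hole).val.map (gameOf H)).countP P = 0 :=
  countP_val_map_eq_zero _ _ _ fun p hp => h p (Finset.mem_filter.mp hp).2.2

lemma crossCount_one (P : Game n → Prop) [DecidablePred P] (a b : Fin n)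
    (hab : hole a ≠ hole b) (hP : P (gameOf H (a, b)))
    (huniq : ∀ p : Fin n × Fin n, hole p.1 ≠ hole p.2 → P (gameOf H p) →
      p = (a, b) ∨ p = (b, a)) :
    ((crossCells hole).val.map (gameOf H)).countP P = 1 := by
  have hne : a ≠ b := fun h => hab (h ▸ rfl)
  rcases lt_or_gt_of_ne hne with hlt | hgt
  · refine countP_val_map_eq_one _ _ _ (a, b)
      (Finset.mem_filter.mpr ⟨Finset.mem_univ _, hlt, hab⟩) hP fun y hy hPy => ?_
    have hy' := Finset.mem_filter.mp hy
    rcases huniq y hy'.2.2 hPy with rfl | rfl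
    · rfl
    · exact absurd hy'.2.1 (not_lt.mpr hlt.le)
  · refine countP_val_map_eq_one _ _ _ (b, a)
      (Finset.mem_filter.mpr ⟨Finset.mem_univ _, hgt, hab.symm⟩)
      (by rwa [gameOf_swap]) fun y hy hPy => ?_
    have hy' := Finset.mem_filter.mp hy
    rcases huniq y hy'.2.2 hPy with rfl | rfl
    · exact absurd hy'.2.1 (not_lt.mpr hgt.le)
    · rfl

lemma inSum_zero (P : Game n → Prop) [DecidablePred P]
    (h : ∀ i : Fin m, ∀ g ∈ (C i).games, ¬ P (emb hole i g)) :
    ∑ i : Fin m, (C i).games.countP (fun g => P (emb hole i g)) = 0 :=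
  Finset.sum_eq_zero fun i _ => Multiset.countP_eq_zero.mpr (h i)

lemma inSum_single (P : Game n → Prop) [DecidablePred P] (i : Fin m)
    (h : ∀ j : Fin m, j ≠ i → ∀ g ∈ (C j).games, ¬ P (emb hole j g)) :
    ∑ j : Fin m, (C j).games.countP (fun g => P (emb hole j g))
      = (C i).games.countP (fun g => P (emb hole i g)) :=
  Finset.sum_eq_single i (fun j _ hj => Multiset.countP_eq_zero.mpr (h j hj)) (by simp)

lemma crossPartners_zero (mm w : Fin n) (h : hole mm = hole w) :
    ((crossCells hole).val.map (gameOf H)).countP (Game.partners mm w) = 0 := by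
  refine crossCount_zero H _ fun p hp hP => ?_
  rw [gameOf, partners_mk] at hP
  rcases hP with hP | hP
  · have h1 : p.1 = mm := (congrArg Prod.fst hP).symm
    have h2 : H.L p.1 p.2 = w := (congrArg Prod.snd hP).symm
    exact H.row_no_hole p.1 p.2 (Ne.symm hp) (by rw [h2, ← h, h1])
  · have h1 : p.2 = mm := (congrArg Prod.fst hP).symm
    have h2 : H.L p.2 p.1 = w := (congrArg Prod.snd hP).symm
    exact H.row_no_hole p.2 p.1 hp (by rw [h2, ← h, h1])

lemma crossPartners_one (mm w : Fin n) (h : hole mm ≠ hole w) :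
    ((crossCells hole).val.map (gameOf H)).countP (Game.partners mm w) = 1 := by
  obtain ⟨j0, ⟨hj0, hLj0⟩, huniq⟩ := H.row_once mm w (Ne.symm h)
  refine crossCount_one H _ mm j0 (Ne.symm hj0) ?_ fun p hp hP => ?_
  · rw [gameOf, partners_mk]
    left
    exact Prod.ext rfl hLj0.symm
  · rw [gameOf, partners_mk] at hP
    rcases hP with hP | hP
    · have h1 : p.1 = mm := (congrArg Prod.fst hP).symm
      have h2 : H.L p.1 p.2 = w := (congrArg Prod.snd hP).symm
      rw [h1] at hp h2
      exact Or.inl (Prod.ext h1 (huniq p.2 ⟨Ne.symm hp, h2⟩))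
    · have h1 : p.2 = mm := (congrArg Prod.fst hP).symm
      have h2 : H.L p.2 p.1 = w := (congrArg Prod.snd hP).symm
      rw [h1] at hp h2
      exact Or.inr (Prod.ext (huniq p.1 ⟨hp, h2⟩) h1)

lemma crossMW_zero (mm w : Fin n) (h : hole mm = hole w) :
    ((crossCells hole).val.map (gameOf H)).countP (Game.opposesMW mm w) = 0 := by
  refine crossCount_zero H _ fun p hp hP => ?_
  rw [gameOf, opposesMW_mk] at hP
  dsimp only at hP
  rcases hP with ⟨h1, h2⟩ | ⟨h1, h2⟩
  · exact H.col_no_hole p.2 p.1 (Ne.symm hp) (by rw [h2, ← h, h1])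
  · exact H.col_no_hole p.1 p.2 hp (by rw [h2, ← h, h1])

lemma crossMW_one (mm w : Fin n) (h : hole mm ≠ hole w) :
    ((crossCells hole).val.map (gameOf H)).countP (Game.opposesMW mm w) = 1 := by
  obtain ⟨r0, ⟨hr0, hLr0⟩, huniq⟩ := H.col_once mm w (Ne.symm h)
  refine crossCount_one H _ mm r0 (Ne.symm hr0) ?_ fun p hp hP => ?_
  · rw [gameOf, opposesMW_mk]
    exact Or.inl ⟨rfl, hLr0⟩
  · rw [gameOf, opposesMW_mk] at hP
    dsimp only at hP
    rcases hP with ⟨h1, h2⟩ | ⟨h1, h2⟩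
    · rw [h1] at hp h2
      exact Or.inl (Prod.ext h1 (huniq p.2 ⟨Ne.symm hp, h2⟩))
    · rw [h1] at hp h2
      exact Or.inr (Prod.ext (huniq p.1 ⟨hp, h2⟩) h1)

lemma crossMM_zero (mm m' : Fin n) (h : hole mm = hole m') :
    ((crossCells hole).val.map (gameOf H)).countP (Game.opposesMM mm m') = 0 := by
  refine crossCount_zero H _ fun p hp hP => ?_
  rw [gameOf, opposesMM_mk] at hP
  dsimp only at hP
  rcases hP with ⟨h1, h2⟩ | ⟨h1, h2⟩
  · exact hp (by rw [h1, h2, h])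
  · exact hp (by rw [h1, h2, ← h])

lemma crossMM_one (mm m' : Fin n) (h : hole mm ≠ hole m') :
    ((crossCells hole).val.map (gameOf H)).countP (Game.opposesMM mm m') = 1 := by
  refine crossCount_one H _ mm m' h ?_ fun p hp hP => ?_
  · rw [gameOf, opposesMM_mk]
    exact Or.inl ⟨rfl, rfl⟩
  · rw [gameOf, opposesMM_mk] at hP
    dsimp only at hP
    rcases hP with ⟨h1, h2⟩ | ⟨h1, h2⟩
    · exact Or.inl (Prod.ext h1 h2)
    · exact Or.inr (Prod.ext h2 h1)

lemma crossWW_zero (w w' : Fin n) (h : hole w = hole w') :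
    ((crossCells hole).val.map (gameOf H)).countP (Game.opposesWW w w') = 0 := by
  refine crossCount_zero H _ fun p hp hP => ?_
  rw [gameOf, opposesWW_mk] at hP
  dsimp only at hP
  rcases hP with ⟨h1, h2⟩ | ⟨h1, h2⟩
  · exact crossSymb H p.1 p.2 hp (by rw [h1, h2, h])
  · exact crossSymb H p.1 p.2 hp (by rw [h1, h2, ← h])

lemma crossWW_one (w w' : Fin n) (h : hole w ≠ hole w') :
    ((crossCells hole).val.map (gameOf H)).countP (Game.opposesWW w w') = 1 := by
  obtain ⟨c, ⟨hc, e1, e2⟩, hu⟩ := H.orth w w' h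
  refine crossCount_one H _ c.1 c.2 hc ?_ fun p hp hP => ?_
  · rw [gameOf, opposesWW_mk]
    exact Or.inl ⟨e1, e2⟩
  · rw [gameOf, opposesWW_mk] at hP
    dsimp only at hP
    rcases hP with ⟨h1, h2⟩ | ⟨h1, h2⟩
    · exact Or.inl (hu p ⟨hp, h1, h2⟩)
    · have h3 := hu (p.2, p.1) ⟨Ne.symm hp, h1, h2⟩
      exact Or.inr (Prod.ext (congrArg Prod.snd h3) (congrArg Prod.fst h3))

lemma inPartners (i : Fin m) (x y : Fin (hs hole i)) :
    ∑ j : Fin m, (C j).games.countP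
        (fun g => Game.partners (up hole i x) (up hole i y) (emb hole j g))
      = (C i).games.countP (Game.partners x y) := by
  have h0 := inSum_single C (Game.partners (up hole i x) (up hole i y)) i
    (fun j hj g _ hP =>
      hj (((hole_up (hole := hole) x).symm.trans (partners_emb_hole hP).1).symm))
  rw [h0]
  exact Multiset.countP_congr rfl fun g _ => propext emb_partners

lemma inPartners_zero (x y : Fin n) (h : hole x ≠ hole y) :
    ∑ j : Fin m, (C j).games.countP (fun g => Game.partners x y (emb hole j g)) = 0 :=
  inSum_zero C _ fun j g _ hP =>
    h (by obtain ⟨h1, h2⟩ := partners_emb_hole hP; rw [h1, h2])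

lemma inMW (i : Fin m) (x y : Fin (hs hole i)) :
    ∑ j : Fin m, (C j).games.countP
        (fun g => Game.opposesMW (up hole i x) (up hole i y) (emb hole j g))
      = (C i).games.countP (Game.opposesMW x y) := by
  have h0 := inSum_single C (Game.opposesMW (up hole i x) (up hole i y)) i
    (fun j hj g _ hP =>
      hj (((hole_up (hole := hole) x).symm.trans (opposesMW_emb_hole hP).1).symm))
  rw [h0]
  exact Multiset.countP_congr rfl fun g _ => propext emb_opposesMW

lemma inMW_zero (x y : Fin n) (h : hole x ≠ hole y) :
    ∑ j : Fin m, (C j).games.countP (fun g => Game.opposesMW x y (emb hole j g)) = 0 :=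
  inSum_zero C _ fun j g _ hP =>
    h (by obtain ⟨h1, h2⟩ := opposesMW_emb_hole hP; rw [h1, h2])

lemma inMM (i : Fin m) (x y : Fin (hs hole i)) :
    ∑ j : Fin m, (C j).games.countP
        (fun g => Game.opposesMM (up hole i x) (up hole i y) (emb hole j g))
      = (C i).games.countP (Game.opposesMM x y) := by
  have h0 := inSum_single C (Game.opposesMM (up hole i x) (up hole i y)) i
    (fun j hj g _ hP =>
      hj (((hole_up (hole := hole) x).symm.trans (opposesMM_emb_hole hP).1).symm))
  rw [h0]
  exact Multiset.countP_congr rfl fun g _ => propext emb_opposesMM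

lemma inMM_zero (x y : Fin n) (h : hole x ≠ hole y) :
    ∑ j : Fin m, (C j).games.countP (fun g => Game.opposesMM x y (emb hole j g)) = 0 :=
  inSum_zero C _ fun j g _ hP =>
    h (by obtain ⟨h1, h2⟩ := opposesMM_emb_hole hP; rw [h1, h2])

lemma inWW (i : Fin m) (x y : Fin (hs hole i)) :
    ∑ j : Fin m, (C j).games.countP
        (fun g => Game.opposesWW (up hole i x) (up hole i y) (emb hole j g))
      = (C i).games.countP (Game.opposesWW x y) := by
  have h0 := inSum_single C (Game.opposesWW (up hole i x) (up hole i y)) i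
    (fun j hj g _ hP =>
      hj (((hole_up (hole := hole) x).symm.trans (opposesWW_emb_hole hP).1).symm))
  rw [h0]
  exact Multiset.countP_congr rfl fun g _ => propext emb_opposesWW

lemma inWW_zero (x y : Fin n) (h : hole x ≠ hole y) :
    ∑ j : Fin m, (C j).games.countP (fun g => Game.opposesWW x y (emb hole j g)) = 0 :=
  inSum_zero C _ fun j g _ hP =>
    h (by obtain ⟨h1, h2⟩ := opposesWW_emb_hole hP; rw [h1, h2])

end Big

section Final

variable {hole : Fin n → Fin m} {k : Fin m → ℕ}

noncomputable def bigCMDRR (H : HSOLS n m hole)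
    (C : ∀ i : Fin m, CMDRR (hs hole i) (k i)) : CMDRR n (∑ i : Fin m, k i) where
  spouses := bigSpouses C
  spouses_card := by
    rw [bigSpouses, Finset.card_biUnion]
    · exact Finset.sum_congr rfl fun i _ => by
        rw [Finset.card_image_of_injective _ (pm_inj i), (C i).spouses_card]
    · intro i _ j _ hij
      rw [Function.onFun, Finset.disjoint_left]
      rintro p hp hq
      obtain ⟨q, -, rfl⟩ := Finset.mem_image.mp hp
      obtain ⟨r, -, he⟩ := Finset.mem_image.mp hq
      apply hij
      have := congrArg (fun z : Fin n × Fin n => hole z.1) he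
      simpa [pm] using this.symm
  spouses_inj1 := by
    intro p hp q hq hpq
    rw [mem_bigSpouses] at hp hq
    obtain ⟨i, a, ha, rfl⟩ := hp
    obtain ⟨j, b, hb, rfl⟩ := hq
    have hij : i = j := by
      have := congrArg hole hpq
      simpa [pm] using this
    subst hij
    have hab : a.1 = b.1 := up_inj i (by simpa [pm] using hpq)
    rw [(C i).spouses_inj1 a ha b hb hab]
  spouses_inj2 := by
    intro p hp q hq hpq
    rw [mem_bigSpouses] at hp hq
    obtain ⟨i, a, ha, rfl⟩ := hp
    obtain ⟨j, b, hb, rfl⟩ := hq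
    have hij : i = j := by
      have := congrArg hole hpq
      simpa [pm] using this
    subst hij
    have hab : a.2 = b.2 := up_inj i (by simpa [pm] using hpq)
    rw [(C i).spouses_inj2 a ha b hb hab]
  games := bigGames H C
  valid := by
    intro g hg
    rw [bigGames, Multiset.mem_add] at hg
    rcases hg with hg | hg
    · obtain ⟨p, hp, rfl⟩ := Multiset.mem_map.mp hg
      have hp2 : p ∈ crossCells hole := hp
      have hp' : hole p.1 ≠ hole p.2 := (Finset.mem_filter.mp hp2).2.2
      exact valid_mk (a := (p.1, H.L p.1 p.2)) (b := (p.2, H.L p.2 p.1))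
        (fun h => hp' (congrArg hole h))
        (fun h => crossSymb H p.1 p.2 hp' (congrArg hole h))
    · rw [Multiset.mem_sum] at hg
      obtain ⟨i, -, hg⟩ := hg
      obtain ⟨g', hg', rfl⟩ := Multiset.mem_map.mp hg
      obtain ⟨a, b, rfl, h1, h2⟩ := (C i).valid g' hg'
      rw [emb_mk]
      exact valid_mk (fun h => h1 (up_inj i h)) (fun h => h2 (up_inj i h))
  no_spouse_game := by
    intro g hg p hp hcon
    obtain ⟨hman, hwoman⟩ := hcon
    rw [mem_bigSpouses] at hp
    obtain ⟨i, q, hq, rfl⟩ := hp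
    rw [bigGames, Multiset.mem_add] at hg
    rcases hg with hg | hg
    · obtain ⟨c, hc, rfl⟩ := Multiset.mem_map.mp hg
      have hc2 : c ∈ crossCells hole := hc
      have hc' : hole c.1 ≠ hole c.2 := (Finset.mem_filter.mp hc2).2.2
      simp only [gameOf, manIn_mk, pm] at hman
      simp only [gameOf, womanIn_mk, pm] at hwoman
      rcases hman with h1 | h1 <;> rcases hwoman with h2 | h2
      · exact H.row_no_hole c.1 c.2 (Ne.symm hc')
          (by rw [h2, hole_up (hole := hole) q.2, h1, hole_up (hole := hole) q.1])
      · exact H.col_no_hole c.2 c.1 (Ne.symm hc')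
          (by rw [h2, hole_up (hole := hole) q.2, h1, hole_up (hole := hole) q.1])
      · exact H.col_no_hole c.1 c.2 hc'
          (by rw [h2, hole_up (hole := hole) q.2, h1, hole_up (hole := hole) q.1])
      · exact H.row_no_hole c.2 c.1 hc'
          (by rw [h2, hole_up (hole := hole) q.2, h1, hole_up (hole := hole) q.1])
    · rw [Multiset.mem_sum] at hg
      obtain ⟨j, -, hg⟩ := hg
      obtain ⟨g', hg', rfl⟩ := Multiset.mem_map.mp hg
      have hji : j = i := by
        have := manIn_emb_hole (hole := hole) hman
        rw [show (pm hole i q).1 = up hole i q.1 from rfl,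
          hole_up (hole := hole) q.1] at this
        exact this.symm
      subst hji
      exact (C j).no_spouse_game g' hg' q hq ⟨emb_manIn.mp hman, emb_womanIn.mp hwoman⟩
  partners_once := by
    intro mm w hmw
    rw [bigGames_countP]
    by_cases hh : hole mm = hole w
    · obtain ⟨i, hi⟩ : ∃ i, hole mm = i := ⟨_, rfl⟩
      obtain ⟨x, rfl⟩ := up_surj hi
      obtain ⟨y, rfl⟩ := up_surj (hh.symm.trans hi)
      rw [crossPartners_zero H _ _ hh, inPartners C i x y,
        (C i).partners_once x y (fun hc => hmw ((pm_mem_bigSpouses C).mpr hc))]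
    · rw [crossPartners_one H mm w hh, inPartners_zero C mm w hh]
  opposesMW_once := by
    intro mm w hmw
    rw [bigGames_countP]
    by_cases hh : hole mm = hole w
    · obtain ⟨i, hi⟩ : ∃ i, hole mm = i := ⟨_, rfl⟩
      obtain ⟨x, rfl⟩ := up_surj hi
      obtain ⟨y, rfl⟩ := up_surj (hh.symm.trans hi)
      rw [crossMW_zero H _ _ hh, inMW C i x y,
        (C i).opposesMW_once x y (fun hc => hmw ((pm_mem_bigSpouses C).mpr hc))]
    · rw [crossMW_one H mm w hh, inMW_zero C mm w hh]
  spousedM_opposes := by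
    intro mm hmem m' hne
    obtain ⟨i, hi⟩ : ∃ i, hole mm = i := ⟨_, rfl⟩
    obtain ⟨x, rfl⟩ := up_surj hi
    have hxs : x ∈ (C i).spouses.image Prod.fst := (up_mem_image_fst C).mp hmem
    rw [bigGames_countP]
    by_cases hh : hole m' = i
    · obtain ⟨y, rfl⟩ := up_surj hh
      have hyx : y ≠ x := fun h => hne (by rw [h])
      rw [crossMM_zero H _ _ (by rw [hole_up (hole := hole), hole_up (hole := hole)]), inMM C i x y,
        (C i).spousedM_opposes x hxs y hyx]
    · have hne' : hole (up hole i x) ≠ hole m' := by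
        rw [hole_up (hole := hole)]; exact fun h => hh h.symm
      rw [crossMM_one H _ m' hne', inMM_zero C _ m' hne']
  spousedW_opposes := by
    intro w hmem w' hne
    obtain ⟨i, hi⟩ : ∃ i, hole w = i := ⟨_, rfl⟩
    obtain ⟨x, rfl⟩ := up_surj hi
    have hxs : x ∈ (C i).spouses.image Prod.snd := (up_mem_image_snd C).mp hmem
    rw [bigGames_countP]
    by_cases hh : hole w' = i
    · obtain ⟨y, rfl⟩ := up_surj hh
      have hyx : y ≠ x := fun h => hne (by rw [h])
      rw [crossWW_zero H _ _ (by rw [hole_up (hole := hole), hole_up (hole := hole)]), inWW C i x y,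
        (C i).spousedW_opposes x hxs y hyx]
    · have hne' : hole (up hole i x) ≠ hole w' := by
        rw [hole_up (hole := hole)]; exact fun h => hh h.symm
      rw [crossWW_one H _ w' hne', inWW_zero C _ w' hne']
  unspousedM_opposes := by
    intro mm hmem
    obtain ⟨i, hi⟩ : ∃ i, hole mm = i := ⟨_, rfl⟩
    obtain ⟨x, rfl⟩ := up_surj hi
    have hxs : x ∉ (C i).spouses.image Prod.fst :=
      fun hc => hmem ((up_mem_image_fst C).mpr hc)
    obtain ⟨x', hx'ne, hx'uns, h2, h1⟩ := (C i).unspousedM_opposes x hxs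
    refine ⟨up hole i x', fun h => hx'ne (up_inj i h), ?_, ?_, ?_⟩
    · exact fun hc => hx'uns ((up_mem_image_fst C).mp hc)
    · rw [bigGames_countP, crossMM_zero H _ _ (by rw [hole_up (hole := hole), hole_up (hole := hole)]),
        inMM C i x x', h2]
    · intro m'' hm1 hm2
      rw [bigGames_countP]
      by_cases hh : hole m'' = i
      · obtain ⟨y, rfl⟩ := up_surj hh
        rw [crossMM_zero H _ _ (by rw [hole_up (hole := hole), hole_up (hole := hole)]), inMM C i x y,
          h1 y (fun h => hm1 (by rw [h])) (fun h => hm2 (by rw [h]))]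
      · have hne' : hole (up hole i x) ≠ hole m'' := by
          rw [hole_up (hole := hole)]; exact fun h => hh h.symm
        rw [crossMM_one H _ m'' hne', inMM_zero C _ m'' hne']
  unspousedW_opposes := by
    intro w hmem
    obtain ⟨i, hi⟩ : ∃ i, hole w = i := ⟨_, rfl⟩
    obtain ⟨x, rfl⟩ := up_surj hi
    have hxs : x ∉ (C i).spouses.image Prod.snd :=
      fun hc => hmem ((up_mem_image_snd C).mpr hc)
    obtain ⟨x', hx'ne, hx'uns, h2, h1⟩ := (C i).unspousedW_opposes x hxs
    refine ⟨up hole i x', fun h => hx'ne (up_inj i h), ?_, ?_, ?_⟩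
    · exact fun hc => hx'uns ((up_mem_image_snd C).mp hc)
    · rw [bigGames_countP, crossWW_zero H _ _ (by rw [hole_up (hole := hole), hole_up (hole := hole)]),
        inWW C i x x', h2]
    · intro w'' hw1 hw2
      rw [bigGames_countP]
      by_cases hh : hole w'' = i
      · obtain ⟨y, rfl⟩ := up_surj hh
        rw [crossWW_zero H _ _ (by rw [hole_up (hole := hole), hole_up (hole := hole)]), inWW C i x y,
          h1 y (fun h => hw1 (by rw [h])) (fun h => hw2 (by rw [h]))]
      · have hne' : hole (up hole i x) ≠ hole w'' := by
          rw [hole_up (hole := hole)]; exact fun h => hh h.symm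
        rw [crossWW_one H _ w'' hne', inWW_zero C _ w'' hne']

end Final
end Construction
end CMDRRfill

/-- Filling the holes of an HSOLS with CMDRRs yields a CMDRR whose number of
spouse pairs is the sum of those of the ingredients. -/
theorem cmdrr_fill_hsols (n m : ℕ) (hole : Fin n → Fin m)
    (hsurj : Function.Surjective hole) (H : HSOLS n m hole) (k : Fin m → ℕ)
    (hk : ∀ i : Fin m,
      Nonempty (CMDRR (Finset.univ.filter (fun x : Fin n => hole x = i)).card (k i))) :
    Nonempty (CMDRR n (∑ i : Fin m, k i)) := by
  exact ⟨CMDRRfill.bigCMDRR H fun i => (hk i).some⟩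
end

section
/- If a strict MMDRR(n) exists, then n is even. -/
open scoped Classical

/-- If a strict MMDRR(n) exists (every man-woman pair partners exactly once and
opposes exactly once, and every pair of distinct same-sex players opposes at
least once), then `n` is even. -/
theorem strict_mmdrr_even (n : ℕ) (games : Multiset (Game n))
    (hvalid : ∀ g ∈ games, g.valid)
    (hpartners : ∀ m w : Fin n, games.countP (Game.partners m w) = 1)
    (hopp : ∀ m w : Fin n, games.countP (Game.opposesMW m w) = 1)
    (hmm : ∀ m m' : Fin n, m ≠ m' → 1 ≤ games.countP (Game.opposesMM m m'))
    (hww : ∀ w w' : Fin n, w ≠ w' → 1 ≤ games.countP (Game.opposesWW w w')) :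
    Even n := by
  have key : ∀ s : Multiset (Game n), (∀ g ∈ s, g.valid) →
      ∑ p : Fin n × Fin n, s.countP (Game.partners p.1 p.2) = 2 * Multiset.card s := by
    intro s
    induction s using Multiset.induction with
    | empty => intro _; simp
    | cons a s ih =>
      intro h
      obtain ⟨x, y, rfl, hx1, _⟩ := h a (Multiset.mem_cons_self a s)
      have hxy : x ≠ y := fun hh => hx1 (by rw [hh])
      have ihs := ih (fun g hg => h g (Multiset.mem_cons_of_mem hg))
      simp only [Multiset.countP_cons, Finset.sum_add_distrib, ihs, Multiset.card_cons]
      have hsum : (∑ p : Fin n × Fin n,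
          if Game.partners p.1 p.2 s(x, y) then 1 else 0) = 2 := by
        have : ∀ p : Fin n × Fin n, Game.partners p.1 p.2 s(x, y) ↔ p ∈ ({x, y} : Finset _) := by
          intro p
          simp [Game.partners, Sym2.mem_iff, Prod.mk.eta, Finset.mem_insert]
        rw [Finset.sum_congr rfl (fun p _ => by rw [if_congr (this p) rfl rfl])]
        rw [Finset.sum_ite_mem, Finset.univ_inter, Finset.sum_const,
          Finset.card_insert_of_notMem (by simpa using hxy), Finset.card_singleton]
        rfl
      omega
  have h1 : (∑ p : Fin n × Fin n, games.countP (Game.partners p.1 p.2)) = n * n := by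
    simp [hpartners]
  have h2 := key games hvalid
  have : Even (n * n) := ⟨Multiset.card games, by omega⟩
  rcases Nat.even_mul.mp this with h | h <;> exact h
end

section
/- For each k ∈ {1, 3, 5} there exists a CMDRR(7,k). -/
open scoped Classical

/-! ### Auxiliary decidability machinery -/

section Dec
variable {n : ℕ}

private def validb : Game n → Bool :=
  Sym2.lift ⟨fun a b => decide (a.1 ≠ b.1 ∧ a.2 ≠ b.2),
    fun a b => decide_eq_decide.mpr (by tauto)⟩

private lemma valid_iff (g : Game n) : g.valid ↔ validb g = true := by
  induction g using Sym2.inductionOn with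
  | hf x y =>
    simp only [validb, Sym2.lift_mk, decide_eq_true_eq, Game.valid]
    constructor
    · rintro ⟨a, b, h, h1, h2⟩
      rw [Sym2.eq_iff] at h
      rcases h with ⟨rfl, rfl⟩ | ⟨rfl, rfl⟩ <;> tauto
    · rintro ⟨h1, h2⟩
      exact ⟨x, y, rfl, h1, h2⟩

instance : DecidablePred (Game.valid (n := n)) :=
  fun g => decidable_of_iff _ (valid_iff g).symm

private def manInb (m : Fin n) : Game n → Bool :=
  Sym2.lift ⟨fun a b => decide (a.1 = m ∨ b.1 = m),
    fun a b => decide_eq_decide.mpr (by tauto)⟩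

private lemma manIn_iff (m : Fin n) (g : Game n) : g.manIn m ↔ manInb m g = true := by
  induction g using Sym2.inductionOn with
  | hf x y =>
    simp only [manInb, Sym2.lift_mk, decide_eq_true_eq, Game.manIn]
    constructor
    · rintro ⟨a, b, h, h1⟩
      rw [Sym2.eq_iff] at h
      rcases h with ⟨rfl, rfl⟩ | ⟨rfl, rfl⟩ <;> tauto
    · rintro (h1 | h1)
      · exact ⟨x, y, rfl, h1⟩
      · exact ⟨y, x, Sym2.eq_swap.symm, h1⟩

instance (m : Fin n) : DecidablePred (Game.manIn m) :=
  fun g => decidable_of_iff _ (manIn_iff m g).symm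

private def womanInb (w : Fin n) : Game n → Bool :=
  Sym2.lift ⟨fun a b => decide (a.2 = w ∨ b.2 = w),
    fun a b => decide_eq_decide.mpr (by tauto)⟩

private lemma womanIn_iff (w : Fin n) (g : Game n) : g.womanIn w ↔ womanInb w g = true := by
  induction g using Sym2.inductionOn with
  | hf x y =>
    simp only [womanInb, Sym2.lift_mk, decide_eq_true_eq, Game.womanIn]
    constructor
    · rintro ⟨a, b, h, h1⟩
      rw [Sym2.eq_iff] at h
      rcases h with ⟨rfl, rfl⟩ | ⟨rfl, rfl⟩ <;> tauto
    · rintro (h1 | h1)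
      · exact ⟨x, y, rfl, h1⟩
      · exact ⟨y, x, Sym2.eq_swap.symm, h1⟩

instance (w : Fin n) : DecidablePred (Game.womanIn w) :=
  fun g => decidable_of_iff _ (womanIn_iff w g).symm

instance (m w : Fin n) : DecidablePred (Game.partners m w) :=
  fun g => by unfold Game.partners; infer_instance

private def oppMWb (m w : Fin n) : Game n → Bool :=
  Sym2.lift ⟨fun a b => decide ((a.1 = m ∧ b.2 = w) ∨ (b.1 = m ∧ a.2 = w)),
    fun a b => decide_eq_decide.mpr (by tauto)⟩

private lemma oppMW_iff (m w : Fin n) (g : Game n) :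
    Game.opposesMW m w g ↔ oppMWb m w g = true := by
  induction g using Sym2.inductionOn with
  | hf x y =>
    simp only [oppMWb, Sym2.lift_mk, decide_eq_true_eq, Game.opposesMW]
    constructor
    · rintro ⟨a, b, h, h1, h2⟩
      rw [Sym2.eq_iff] at h
      rcases h with ⟨rfl, rfl⟩ | ⟨rfl, rfl⟩ <;> tauto
    · rintro (⟨h1, h2⟩ | ⟨h1, h2⟩)
      · exact ⟨x, y, rfl, h1, h2⟩
      · exact ⟨y, x, Sym2.eq_swap.symm, h1, h2⟩

instance (m w : Fin n) : DecidablePred (Game.opposesMW m w) :=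
  fun g => decidable_of_iff _ (oppMW_iff m w g).symm

private def oppMMb (m m' : Fin n) : Game n → Bool :=
  Sym2.lift ⟨fun a b => decide ((a.1 = m ∧ b.1 = m') ∨ (b.1 = m ∧ a.1 = m')),
    fun a b => decide_eq_decide.mpr (by tauto)⟩

private lemma oppMM_iff (m m' : Fin n) (g : Game n) :
    Game.opposesMM m m' g ↔ oppMMb m m' g = true := by
  induction g using Sym2.inductionOn with
  | hf x y =>
    simp only [oppMMb, Sym2.lift_mk, decide_eq_true_eq, Game.opposesMM]
    constructor
    · rintro ⟨a, b, h, h1, h2⟩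
      rw [Sym2.eq_iff] at h
      rcases h with ⟨rfl, rfl⟩ | ⟨rfl, rfl⟩ <;> tauto
    · rintro (⟨h1, h2⟩ | ⟨h1, h2⟩)
      · exact ⟨x, y, rfl, h1, h2⟩
      · exact ⟨y, x, Sym2.eq_swap.symm, h1, h2⟩

instance (m m' : Fin n) : DecidablePred (Game.opposesMM m m') :=
  fun g => decidable_of_iff _ (oppMM_iff m m' g).symm

private def oppWWb (w w' : Fin n) : Game n → Bool :=
  Sym2.lift ⟨fun a b => decide ((a.2 = w ∧ b.2 = w') ∨ (b.2 = w ∧ a.2 = w')),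
    fun a b => decide_eq_decide.mpr (by tauto)⟩

private lemma oppWW_iff (w w' : Fin n) (g : Game n) :
    Game.opposesWW w w' g ↔ oppWWb w w' g = true := by
  induction g using Sym2.inductionOn with
  | hf x y =>
    simp only [oppWWb, Sym2.lift_mk, decide_eq_true_eq, Game.opposesWW]
    constructor
    · rintro ⟨a, b, h, h1, h2⟩
      rw [Sym2.eq_iff] at h
      rcases h with ⟨rfl, rfl⟩ | ⟨rfl, rfl⟩ <;> tauto
    · rintro (⟨h1, h2⟩ | ⟨h1, h2⟩)
      · exact ⟨x, y, rfl, h1, h2⟩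
      · exact ⟨y, x, Sym2.eq_swap.symm, h1, h2⟩

instance (w w' : Fin n) : DecidablePred (Game.opposesWW w w') :=
  fun g => decidable_of_iff _ (oppWW_iff w w' g).symm

private theorem cpir {α : Type*} (p : α → Prop) {j : DecidablePred p} [i : DecidablePred p]
    (s : Multiset α) : @Multiset.countP α p j s = @Multiset.countP α p i s := by
  congr!

end Dec

/-! ### The explicit tournaments -/

private def SP1 : Finset (Fin 7 × Fin 7) := {(0, 0)}

private def GS1 : Multiset (Game 7) :=
  {s((0, 1), (1, 2)),
    s((0, 2), (2, 1)),
    s((0, 3), (3, 4)),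
    s((0, 4), (4, 3)),
    s((0, 5), (5, 6)),
    s((0, 6), (6, 5)),
    s((1, 0), (2, 3)),
    s((1, 1), (3, 5)),
    s((1, 3), (6, 6)),
    s((1, 4), (2, 0)),
    s((1, 5), (4, 2)),
    s((1, 6), (5, 4)),
    s((2, 2), (4, 6)),
    s((2, 4), (5, 5)),
    s((2, 5), (6, 3)),
    s((2, 6), (3, 1)),
    s((3, 0), (4, 5)),
    s((3, 2), (6, 4)),
    s((3, 3), (5, 2)),
    s((3, 6), (4, 0)),
    s((4, 1), (5, 3)),
    s((4, 4), (6, 1)),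
    s((5, 0), (6, 2)),
    s((5, 1), (6, 0))}

set_option maxRecDepth 100000 in
private def T1 : CMDRR 7 1 where
  spouses := SP1
  spouses_card := by decide
  spouses_inj1 := by decide
  spouses_inj2 := by decide
  games := GS1
  valid := @of_decide_eq_true _ (Multiset.decidableDforallMultiset) rfl
  no_spouse_game := @of_decide_eq_true _ (Multiset.decidableDforallMultiset) rfl
  partners_once := by
    have H : ∀ m w : Fin 7, (m, w) ∉ SP1 →
        Multiset.countP (Game.partners m w) GS1 = 1 := by decide
    intro m w h
    rw [cpir]
    exact H m w h
  opposesMW_once := by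
    have H : ∀ m w : Fin 7, (m, w) ∉ SP1 →
        Multiset.countP (Game.opposesMW m w) GS1 = 1 := by decide
    intro m w h
    rw [cpir]
    exact H m w h
  spousedM_opposes := by
    have H : ∀ m ∈ SP1.image Prod.fst, ∀ m' : Fin 7, m' ≠ m →
        Multiset.countP (Game.opposesMM m m') GS1 = 1 := by decide
    intro m hm m' h
    rw [cpir]
    exact H m hm m' h
  spousedW_opposes := by
    have H : ∀ w ∈ SP1.image Prod.snd, ∀ w' : Fin 7, w' ≠ w →
        Multiset.countP (Game.opposesWW w w') GS1 = 1 := by decide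
    intro w hw w' h
    rw [cpir]
    exact H w hw w' h
  unspousedM_opposes := by
    have H : ∀ m : Fin 7, m ∉ SP1.image Prod.fst → ∃ m' : Fin 7, m' ≠ m ∧
        m' ∉ SP1.image Prod.fst ∧ Multiset.countP (Game.opposesMM m m') GS1 = 2 ∧
        ∀ m'' : Fin 7, m'' ≠ m → m'' ≠ m' →
          Multiset.countP (Game.opposesMM m m'') GS1 = 1 := by decide
    intro m hm
    obtain ⟨m', h1, h2, h3, h4⟩ := H m hm
    exact ⟨m', h1, h2, by rw [cpir]; exact h3, fun m'' a b => by rw [cpir]; exact h4 m'' a b⟩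
  unspousedW_opposes := by
    have H : ∀ w : Fin 7, w ∉ SP1.image Prod.snd → ∃ w' : Fin 7, w' ≠ w ∧
        w' ∉ SP1.image Prod.snd ∧ Multiset.countP (Game.opposesWW w w') GS1 = 2 ∧
        ∀ w'' : Fin 7, w'' ≠ w → w'' ≠ w' →
          Multiset.countP (Game.opposesWW w w'') GS1 = 1 := by decide
    intro w hw
    obtain ⟨w', h1, h2, h3, h4⟩ := H w hw
    exact ⟨w', h1, h2, by rw [cpir]; exact h3, fun w'' a b => by rw [cpir]; exact h4 w'' a b⟩

private def SP3 : Finset (Fin 7 × Fin 7) := {(0, 0), (1, 1), (2, 2)}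

private def GS3 : Multiset (Game 7) :=
  {s((0, 1), (2, 3)),
    s((0, 2), (1, 4)),
    s((0, 3), (3, 5)),
    s((0, 4), (4, 6)),
    s((0, 5), (5, 1)),
    s((0, 6), (6, 2)),
    s((1, 0), (6, 5)),
    s((1, 2), (3, 0)),
    s((1, 3), (4, 4)),
    s((1, 5), (2, 6)),
    s((1, 6), (5, 3)),
    s((2, 0), (5, 6)),
    s((2, 1), (4, 0)),
    s((2, 4), (3, 3)),
    s((2, 5), (6, 4)),
    s((3, 1), (6, 6)),
    s((3, 2), (4, 1)),
    s((3, 4), (5, 0)),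
    s((3, 6), (4, 5)),
    s((4, 2), (5, 5)),
    s((4, 3), (6, 0)),
    s((5, 2), (6, 3)),
    s((5, 4), (6, 1))}

set_option maxRecDepth 100000 in
private def T3 : CMDRR 7 3 where
  spouses := SP3
  spouses_card := by decide
  spouses_inj1 := by decide
  spouses_inj2 := by decide
  games := GS3
  valid := @of_decide_eq_true _ (Multiset.decidableDforallMultiset) rfl
  no_spouse_game := @of_decide_eq_true _ (Multiset.decidableDforallMultiset) rfl
  partners_once := by
    have H : ∀ m w : Fin 7, (m, w) ∉ SP3 →
        Multiset.countP (Game.partners m w) GS3 = 1 := by decide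
    intro m w h
    rw [cpir]
    exact H m w h
  opposesMW_once := by
    have H : ∀ m w : Fin 7, (m, w) ∉ SP3 →
        Multiset.countP (Game.opposesMW m w) GS3 = 1 := by decide
    intro m w h
    rw [cpir]
    exact H m w h
  spousedM_opposes := by
    have H : ∀ m ∈ SP3.image Prod.fst, ∀ m' : Fin 7, m' ≠ m →
        Multiset.countP (Game.opposesMM m m') GS3 = 1 := by decide
    intro m hm m' h
    rw [cpir]
    exact H m hm m' h
  spousedW_opposes := by
    have H : ∀ w ∈ SP3.image Prod.snd, ∀ w' : Fin 7, w' ≠ w →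
        Multiset.countP (Game.opposesWW w w') GS3 = 1 := by decide
    intro w hw w' h
    rw [cpir]
    exact H w hw w' h
  unspousedM_opposes := by
    have H : ∀ m : Fin 7, m ∉ SP3.image Prod.fst → ∃ m' : Fin 7, m' ≠ m ∧
        m' ∉ SP3.image Prod.fst ∧ Multiset.countP (Game.opposesMM m m') GS3 = 2 ∧
        ∀ m'' : Fin 7, m'' ≠ m → m'' ≠ m' →
          Multiset.countP (Game.opposesMM m m'') GS3 = 1 := by decide
    intro m hm
    obtain ⟨m', h1, h2, h3, h4⟩ := H m hm
    exact ⟨m', h1, h2, by rw [cpir]; exact h3, fun m'' a b => by rw [cpir]; exact h4 m'' a b⟩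
  unspousedW_opposes := by
    have H : ∀ w : Fin 7, w ∉ SP3.image Prod.snd → ∃ w' : Fin 7, w' ≠ w ∧
        w' ∉ SP3.image Prod.snd ∧ Multiset.countP (Game.opposesWW w w') GS3 = 2 ∧
        ∀ w'' : Fin 7, w'' ≠ w → w'' ≠ w' →
          Multiset.countP (Game.opposesWW w w'') GS3 = 1 := by decide
    intro w hw
    obtain ⟨w', h1, h2, h3, h4⟩ := H w hw
    exact ⟨w', h1, h2, by rw [cpir]; exact h3, fun w'' a b => by rw [cpir]; exact h4 w'' a b⟩

private def SP5 : Finset (Fin 7 × Fin 7) := {(0, 0), (1, 1), (2, 2), (3, 3), (4, 4)}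

private def GS5 : Multiset (Game 7) :=
  {s((0, 1), (2, 3)),
    s((0, 2), (1, 4)),
    s((0, 3), (4, 2)),
    s((0, 4), (5, 5)),
    s((0, 5), (3, 6)),
    s((0, 6), (6, 1)),
    s((1, 0), (4, 3)),
    s((1, 2), (5, 6)),
    s((1, 3), (6, 5)),
    s((1, 5), (2, 0)),
    s((1, 6), (3, 4)),
    s((2, 1), (6, 4)),
    s((2, 4), (3, 0)),
    s((2, 5), (4, 6)),
    s((2, 6), (5, 3)),
    s((3, 1), (5, 0)),
    s((3, 2), (4, 1)),
    s((3, 5), (6, 2)),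
    s((4, 0), (6, 6)),
    s((4, 5), (5, 1)),
    s((5, 2), (6, 0)),
    s((5, 4), (6, 3))}

set_option maxRecDepth 100000 in
private def T5 : CMDRR 7 5 where
  spouses := SP5
  spouses_card := by decide
  spouses_inj1 := by decide
  spouses_inj2 := by decide
  games := GS5
  valid := @of_decide_eq_true _ (Multiset.decidableDforallMultiset) rfl
  no_spouse_game := @of_decide_eq_true _ (Multiset.decidableDforallMultiset) rfl
  partners_once := by
    have H : ∀ m w : Fin 7, (m, w) ∉ SP5 →
        Multiset.countP (Game.partners m w) GS5 = 1 := by decide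
    intro m w h
    rw [cpir]
    exact H m w h
  opposesMW_once := by
    have H : ∀ m w : Fin 7, (m, w) ∉ SP5 →
        Multiset.countP (Game.opposesMW m w) GS5 = 1 := by decide
    intro m w h
    rw [cpir]
    exact H m w h
  spousedM_opposes := by
    have H : ∀ m ∈ SP5.image Prod.fst, ∀ m' : Fin 7, m' ≠ m →
        Multiset.countP (Game.opposesMM m m') GS5 = 1 := by decide
    intro m hm m' h
    rw [cpir]
    exact H m hm m' h
  spousedW_opposes := by
    have H : ∀ w ∈ SP5.image Prod.snd, ∀ w' : Fin 7, w' ≠ w →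
        Multiset.countP (Game.opposesWW w w') GS5 = 1 := by decide
    intro w hw w' h
    rw [cpir]
    exact H w hw w' h
  unspousedM_opposes := by
    have H : ∀ m : Fin 7, m ∉ SP5.image Prod.fst → ∃ m' : Fin 7, m' ≠ m ∧
        m' ∉ SP5.image Prod.fst ∧ Multiset.countP (Game.opposesMM m m') GS5 = 2 ∧
        ∀ m'' : Fin 7, m'' ≠ m → m'' ≠ m' →
          Multiset.countP (Game.opposesMM m m'') GS5 = 1 := by decide
    intro m hm
    obtain ⟨m', h1, h2, h3, h4⟩ := H m hm
    exact ⟨m', h1, h2, by rw [cpir]; exact h3, fun m'' a b => by rw [cpir]; exact h4 m'' a b⟩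
  unspousedW_opposes := by
    have H : ∀ w : Fin 7, w ∉ SP5.image Prod.snd → ∃ w' : Fin 7, w' ≠ w ∧
        w' ∉ SP5.image Prod.snd ∧ Multiset.countP (Game.opposesWW w w') GS5 = 2 ∧
        ∀ w'' : Fin 7, w'' ≠ w → w'' ≠ w' →
          Multiset.countP (Game.opposesWW w w'') GS5 = 1 := by decide
    intro w hw
    obtain ⟨w', h1, h2, h3, h4⟩ := H w hw
    exact ⟨w', h1, h2, by rw [cpir]; exact h3, fun w'' a b => by rw [cpir]; exact h4 w'' a b⟩

/-- There exists a CMDRR(7,k) for each k ∈ {1, 3, 5}. -/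
theorem cmdrr_7_exists : ∀ k ∈ ({1, 3, 5} : Set ℕ), Nonempty (CMDRR 7 k) := by
  intro k hk
  simp only [Set.mem_insert_iff, Set.mem_singleton_iff] at hk
  rcases hk with rfl | rfl | rfl
  · exact ⟨T1⟩
  · exact ⟨T3⟩
  · exact ⟨T5⟩
end
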